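/- arXiv:1611.10294 — 6 statements merged into one kernel-verified Lean document; each statement's English description precedes it below -/
import Mathlib

section
/- For s < 0 define the Mehler kernel p_s(x,y) = (π(e^{−s} − e^{s}))^{−1/2} exp( (y² − x²)/2 − s/2 − (e^{s/2}x − e^{−s/2}y)²/(e^{−s} − e^{s}) ), and for n ∈ ℕ and t, z ∈ ℝ define θ_{n,t,z}(x) = e^{tn − sinh(t)(xz + cosh(t)z²/2)} φ_n(x + cosh(t)z). Then for every s < 0, every n ∈ ℕ, all t, z ∈ ℝ and every x ∈ ℝ, ∫_ℝ p_s(x,y) θ_{n,t,z}(y) dy = θ_{n,s+t,z}(x). In particular, taking t = 0, ∫_ℝ p_s(x,y) φ_n(y+z) dy = e^{sn − sinh(s)(xz + cosh(s)z²/2)} φ_n(x + cosh(s)z). -/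
open Real MeasureTheory

/-- Physicists' Hermite polynomials: H₀ = 1, H₁ = 2x, H_{n+2} = 2x H_{n+1} − 2(n+1) H_n. -/
noncomputable def physHermite : ℕ → ℝ → ℝ
  | 0, _ => 1
  | 1, x => 2 * x
  | n + 2, x => 2 * x * physHermite (n + 1) x - 2 * ((n : ℝ) + 1) * physHermite n x

/-- The n-th Hermite function (harmonic oscillator wave function)
φₙ(x) = (2ⁿ n! √π)^{−1/2} Hₙ(x) e^{−x²/2}. -/
noncomputable def hermiteFn (n : ℕ) (x : ℝ) : ℝ :=
  ((2 : ℝ) ^ n * Nat.factorial n * Real.sqrt Real.pi) ^ (-(1 : ℝ) / 2) *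
    physHermite n x * Real.exp (-x ^ 2 / 2)
/-- The Mehler kernel p_s(x,y), the integral kernel of e^{s D} for s < 0, where
D = −(Δ − x² + 1)/2 is the harmonic oscillator operator. -/
noncomputable def mehlerKer (s x y : ℝ) : ℝ :=
  (Real.pi * (Real.exp (-s) - Real.exp s)) ^ (-(1 : ℝ) / 2) *
    Real.exp ((y ^ 2 - x ^ 2) / 2 - s / 2 -
      (Real.exp (s / 2) * x - Real.exp (-s / 2) * y) ^ 2 / (Real.exp (-s) - Real.exp s))

/-- θ_{n,t,z}(x) = e^{tn − sinh(t)(xz + cosh(t)z²/2)} φₙ(x + cosh(t)z). -/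
noncomputable def thetaFn (n : ℕ) (t z x : ℝ) : ℝ :=
  Real.exp (t * n - Real.sinh t * (x * z + Real.cosh t * z ^ 2 / 2)) *
    hermiteFn n (x + Real.cosh t * z)

open Polynomial

noncomputable def physPoly : ℕ → Polynomial ℝ
  | 0 => 1
  | 1 => C 2 * X
  | n + 2 => C 2 * X * physPoly (n + 1) - C (2 * ((n : ℝ) + 1)) * physPoly n

lemma physPoly_add_two (n : ℕ) :
    physPoly (n + 2) = C 2 * X * physPoly (n + 1) - C (2 * ((n : ℝ) + 1)) * physPoly n := by
  simp [physPoly]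

lemma physPoly_eval : ∀ (n : ℕ) (x : ℝ), (physPoly n).eval x = physHermite n x
  | 0, x => by simp [physPoly, physHermite]
  | 1, x => by simp [physPoly, physHermite]
  | n + 2, x => by
      simp [physPoly, physHermite, physPoly_eval (n + 1), physPoly_eval n]

lemma physPoly_derivative_eval : ∀ (n : ℕ) (x : ℝ),
    (physPoly (n + 1)).derivative.eval x = 2 * ((n : ℝ) + 1) * physHermite n x
  | 0, x => by simp [physPoly, physHermite]
  | 1, x => by
      rw [show (1:ℕ) + 1 = 0 + 2 from rfl, physPoly_add_two]
      simp [physPoly, physHermite]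
      ring
  | n + 2, x => by
      rw [show n + 2 + 1 = (n + 1) + 2 from rfl, physPoly_add_two (n+1)]
      simp only [derivative_sub, derivative_mul, derivative_C, derivative_X, eval_sub, eval_add,
        eval_mul, eval_C, eval_X, zero_mul, mul_one, zero_add, one_mul]
      rw [physPoly_derivative_eval (n+1), physPoly_derivative_eval n]
      simp only [physPoly_eval]
      simp only [physHermite]
      push_cast
      ring

lemma physHermite_hasDerivAt (n : ℕ) (c x : ℝ) :
    HasDerivAt (fun y => physHermite n (y + c)) (2 * (n : ℝ) * physHermite (n - 1) (x + c)) x := by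
  cases n with
  | zero =>
      simp only [Nat.cast_zero, zero_mul, mul_zero]
      have : (fun y : ℝ => physHermite 0 (y + c)) = fun _ => (1 : ℝ) := by
        funext y; simp [physHermite]
      rw [this]
      exact hasDerivAt_const x 1
  | succ m =>
      have h1 : HasDerivAt (fun y : ℝ => y + c) 1 x := (hasDerivAt_id x).add_const c
      have h2 := ((physPoly (m + 1)).hasDerivAt (x + c)).comp x h1
      have h3 : HasDerivAt (fun y : ℝ => physHermite (m + 1) (y + c))
          ((physPoly (m + 1)).derivative.eval (x + c)) x := by
        apply HasDerivAt.congr_of_eventuallyEq (by simpa using h2)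
        filter_upwards with y
        simp [Function.comp, physPoly_eval]
      rw [physPoly_derivative_eval] at h3
      simpa using h3

lemma aux_exp_bound {a : ℝ} (ha : 0 < a) (b y : ℝ) :
    Real.exp (-a * y ^ 2 + b * y) ≤ Real.exp (b ^ 2 / (2 * a)) * Real.exp (-(a / 2) * y ^ 2) := by
  rw [← Real.exp_add]
  apply Real.exp_le_exp.2
  have h2 : b * y - (a / 2) * y ^ 2 ≤ b ^ 2 / (2 * a) := by
    rw [le_div_iff₀ (by positivity : (0:ℝ) < 2 * a)]
    nlinarith [sq_nonneg (b - a * y)]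
  linarith

lemma integrable_poly_gauss (p : Polynomial ℝ) {a : ℝ} (ha : 0 < a) (b : ℝ) :
    Integrable (fun y : ℝ => p.eval y * Real.exp (-a * y ^ 2 + b * y)) := by
  induction p using Polynomial.induction_on' with
  | add p q hp hq =>
      simpa [add_mul, Pi.add_def] using hp.add hq
  | monomial k r =>
      simp only [eval_monomial]
      have hmaj : Integrable (fun y : ℝ =>
          |r| * Real.exp (b ^ 2 / (2 * a)) * (|y| ^ k * Real.exp (-(a / 2) * y ^ 2))) := by
        apply Integrable.const_mul
        have h0 := (integrable_rpow_mul_exp_neg_mul_sq (by positivity : (0:ℝ) < a / 2)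
          (s := (k : ℝ)) (lt_of_lt_of_le neg_one_lt_zero (Nat.cast_nonneg k))).abs
        apply h0.congr ?_
        filter_upwards with y
        rw [Real.rpow_natCast, abs_mul, abs_pow, abs_of_nonneg (Real.exp_pos _).le]
      apply hmaj.mono'
      · exact (Continuous.mul (by continuity) (by continuity)).aestronglyMeasurable
      · filter_upwards with y
        rw [Real.norm_eq_abs, abs_mul, abs_mul, Real.abs_exp]
        calc |r| * |y ^ k| * Real.exp (-a * y ^ 2 + b * y)
            ≤ |r| * |y ^ k| * (Real.exp (b ^ 2 / (2 * a)) * Real.exp (-(a / 2) * y ^ 2)) := by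
              apply mul_le_mul_of_nonneg_left (aux_exp_bound ha b y) (by positivity)
          _ = |r| * Real.exp (b ^ 2 / (2 * a)) * (|y| ^ k * Real.exp (-(a / 2) * y ^ 2)) := by
              rw [abs_pow]; ring

lemma tendsto_poly_gauss_atTop (p : Polynomial ℝ) {a : ℝ} (ha : 0 < a) (b : ℝ) :
    Filter.Tendsto (fun y : ℝ => p.eval y * Real.exp (-a * y ^ 2 + b * y)) Filter.atTop (nhds 0) := by
  have h1 : Filter.Tendsto (fun y : ℝ => p.eval y / Real.exp y) Filter.atTop (nhds 0) :=
    p.tendsto_div_exp_atTop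
  have hquad : Filter.Tendsto (fun y : ℝ => -a * y ^ 2 + (b + 1) * y) Filter.atTop Filter.atBot := by
    apply Filter.tendsto_atBot_mono' Filter.atTop ?_ Filter.tendsto_neg_atTop_atBot
    filter_upwards [Filter.eventually_ge_atTop ((|b| + 2) / a),
      Filter.eventually_ge_atTop 0] with y hy1 hy2
    have : (|b| + 2) ≤ a * y := by
      rw [div_le_iff₀ ha] at hy1; linarith [hy1]
    nlinarith [le_abs_self b, neg_abs_le b]
  have h2 : Filter.Tendsto (fun y : ℝ => Real.exp (-a * y ^ 2 + (b + 1) * y))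
      Filter.atTop (nhds 0) := Real.tendsto_exp_atBot.comp hquad
  have h3 := h1.mul h2
  rw [zero_mul] at h3
  apply h3.congr
  intro y
  rw [div_mul_eq_mul_div, div_eq_iff (Real.exp_ne_zero y), mul_assoc, ← Real.exp_add]
  congr 2
  ring

lemma tendsto_poly_gauss_atBot (p : Polynomial ℝ) {a : ℝ} (ha : 0 < a) (b : ℝ) :
    Filter.Tendsto (fun y : ℝ => p.eval y * Real.exp (-a * y ^ 2 + b * y)) Filter.atBot (nhds 0) := by
  have h := tendsto_poly_gauss_atTop (p.comp (-X)) ha (-b)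
  have h2 := h.comp Filter.tendsto_neg_atBot_atTop
  apply h2.congr
  intro y
  simp only [Function.comp_apply, eval_comp, eval_neg, eval_X, neg_neg]
  congr 2
  ring

lemma integral_gauss_deriv_zero (p : Polynomial ℝ) {a : ℝ} (ha : 0 < a) (b : ℝ) :
    ∫ y : ℝ, (p.derivative.eval y + p.eval y * (b - 2 * a * y)) * Real.exp (-a * y ^ 2 + b * y) = 0 := by
  set g' : ℝ → ℝ := fun y => (p.derivative.eval y + p.eval y * (b - 2 * a * y)) *
    Real.exp (-a * y ^ 2 + b * y) with hg'
  have hderiv : ∀ y : ℝ, HasDerivAt (fun u : ℝ => p.eval u * Real.exp (-a * u ^ 2 + b * u)) (g' y) y := by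
    intro y
    have h1 : HasDerivAt (fun u : ℝ => -a * u ^ 2 + b * u) (-a * (2 * y) + b) y := by
      have := ((hasDerivAt_pow 2 y).const_mul (-a)).add ((hasDerivAt_id y).const_mul b)
      simpa [Pi.add_def] using this
    have h2 := (p.hasDerivAt y).mul h1.exp
    apply h2.congr_deriv
    rw [hg']
    ring
  have hint : Integrable g' := by
    have := integrable_poly_gauss (p.derivative + p * (C b - C (2 * a) * X)) ha b
    apply this.congr
    filter_upwards with y
    simp [hg']
  have htop : Filter.Tendsto (fun y : ℝ => p.eval y * Real.exp (-a * y ^ 2 + b * y))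
      Filter.atTop (nhds 0) := tendsto_poly_gauss_atTop p ha b
  have hbot : Filter.Tendsto (fun y : ℝ => p.eval y * Real.exp (-a * y ^ 2 + b * y))
      Filter.atBot (nhds 0) := tendsto_poly_gauss_atBot p ha b
  have hIoi : ∫ y in Set.Ioi (0:ℝ), g' y = 0 - p.eval 0 * Real.exp (-a * 0 ^ 2 + b * 0) :=
    MeasureTheory.integral_Ioi_of_hasDerivAt_of_tendsto' (fun y _ => hderiv y)
      hint.integrableOn htop
  have hIic : ∫ y in Set.Iic (0:ℝ), g' y = p.eval 0 * Real.exp (-a * 0 ^ 2 + b * 0) - 0 :=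
    MeasureTheory.integral_Iic_of_hasDerivAt_of_tendsto' (fun y _ => hderiv y)
      hint.integrableOn hbot
  have := intervalIntegral.integral_Iic_add_Ioi (b := (0:ℝ)) hint.integrableOn hint.integrableOn
  rw [hIic, hIoi] at this
  rw [← this]
  ring

lemma gauss_quadratic {a : ℝ} (ha : 0 < a) (b : ℝ) :
    ∫ y : ℝ, Real.exp (-a * y ^ 2 + b * y)
      = Real.sqrt (π / a) * Real.exp (b ^ 2 / (4 * a)) := by
  have h1 : ∀ y : ℝ, Real.exp (-a * y ^ 2 + b * y)
      = Real.exp (-a * (y - b / (2 * a)) ^ 2) * Real.exp (b ^ 2 / (4 * a)) := by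
    intro y
    rw [← Real.exp_add]
    congr 1
    field_simp
    ring
  simp_rw [h1]
  rw [MeasureTheory.integral_mul_const]
  congr 1
  rw [MeasureTheory.integral_sub_right_eq_self (fun y => Real.exp (-a * y ^ 2)) (b / (2 * a))]
  exact integral_gaussian a

lemma integrable_gauss_herm {a : ℝ} (ha : 0 < a) (b c : ℝ) (m : ℕ) :
    Integrable (fun y : ℝ => Real.exp (-a * y ^ 2 + b * y) * physHermite m (y + c)) := by
  apply (integrable_poly_gauss ((physPoly m).comp (X + C c)) ha b).congr
  filter_upwards with y
  simp [eval_comp, physPoly_eval, mul_comm]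

lemma integrable_y_gauss_herm {a : ℝ} (ha : 0 < a) (b c : ℝ) (m : ℕ) :
    Integrable (fun y : ℝ => y * (Real.exp (-a * y ^ 2 + b * y) * physHermite m (y + c))) := by
  apply (integrable_poly_gauss (X * (physPoly m).comp (X + C c)) ha b).congr
  filter_upwards with y
  simp only [eval_mul, eval_X, eval_comp, eval_add, eval_C, physPoly_eval]
  ring

lemma deriv_eval_shift (m : ℕ) (c y : ℝ) :
    ((physPoly m).comp (X + C c)).derivative.eval y = 2 * (m : ℝ) * physHermite (m - 1) (y + c) := by
  rw [derivative_comp]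
  cases m with
  | zero => simp [physPoly]
  | succ k =>
      simp only [eval_mul, eval_comp, eval_add, eval_X, eval_C, derivative_add, derivative_X,
        derivative_C, add_zero, eval_one]
      rw [physPoly_derivative_eval]
      push_cast
      simp

lemma moment {a : ℝ} (ha : 0 < a) (b c : ℝ) (m : ℕ) :
    2 * a * ∫ y : ℝ, y * (Real.exp (-a * y ^ 2 + b * y) * physHermite m (y + c))
      = b * (∫ y : ℝ, Real.exp (-a * y ^ 2 + b * y) * physHermite m (y + c))
        + 2 * m * ∫ y : ℝ, Real.exp (-a * y ^ 2 + b * y) * physHermite (m - 1) (y + c) := by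
  have h0 := integral_gauss_deriv_zero ((physPoly m).comp (X + C c)) ha b
  have heq : (fun y : ℝ => (((physPoly m).comp (X + C c)).derivative.eval y
        + ((physPoly m).comp (X + C c)).eval y * (b - 2 * a * y)) * Real.exp (-a * y ^ 2 + b * y))
      = fun y : ℝ => 2 * (m : ℝ) * (Real.exp (-a * y ^ 2 + b * y) * physHermite (m - 1) (y + c))
        + b * (Real.exp (-a * y ^ 2 + b * y) * physHermite m (y + c))
        - 2 * a * (y * (Real.exp (-a * y ^ 2 + b * y) * physHermite m (y + c))) := by
    funext y
    rw [deriv_eval_shift]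
    simp only [eval_comp, eval_add, eval_X, eval_C, physPoly_eval]
    ring
  rw [heq] at h0
  have hAB : Integrable (fun y : ℝ =>
      2 * (m : ℝ) * (Real.exp (-a * y ^ 2 + b * y) * physHermite (m - 1) (y + c))
        + b * (Real.exp (-a * y ^ 2 + b * y) * physHermite m (y + c))) :=
    ((integrable_gauss_herm ha b c (m-1)).const_mul _).add
      ((integrable_gauss_herm ha b c m).const_mul _)
  have hC : Integrable (fun y : ℝ =>
      2 * a * (y * (Real.exp (-a * y ^ 2 + b * y) * physHermite m (y + c)))) :=
    (integrable_y_gauss_herm ha b c m).const_mul _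
  rw [MeasureTheory.integral_sub hAB hC,
    MeasureTheory.integral_add ((integrable_gauss_herm ha b c (m-1)).const_mul _)
      ((integrable_gauss_herm ha b c m).const_mul _),
    MeasureTheory.integral_const_mul, MeasureTheory.integral_const_mul,
    MeasureTheory.integral_const_mul] at h0
  linarith

lemma key {a : ℝ} (ha : 1 < a) (b c : ℝ) : ∀ n : ℕ,
    (∫ y : ℝ, Real.exp (-a * y ^ 2 + b * y) * physHermite n (y + c))
      = Real.sqrt (π / a) * Real.exp (b ^ 2 / (4 * a)) * Real.sqrt ((a - 1) / a) ^ n *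
        physHermite n ((b / (2 * a) + c) / Real.sqrt ((a - 1) / a))
  | 0 => by
      have ha0 : 0 < a := lt_trans one_pos ha
      simp only [physHermite, mul_one, pow_zero]
      rw [gauss_quadratic ha0 b]
  | 1 => by
      have ha0 : 0 < a := lt_trans one_pos ha
      have hq0 : 0 < Real.sqrt ((a - 1) / a) :=
        Real.sqrt_pos.2 (div_pos (by linarith) ha0)
      set q := Real.sqrt ((a - 1) / a) with hqdef
      set w := (b / (2 * a) + c) / q with hwdef
      have hw : q * w = b / (2 * a) + c := by
        rw [hwdef, mul_div_cancel₀]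
        exact ne_of_gt hq0
      have h0 := key ha b c 0
      have hm := moment ha0 b c 0
      simp only [Nat.cast_zero, mul_zero, zero_mul, add_zero] at hm
      have hsplit : (fun y : ℝ => Real.exp (-a * y ^ 2 + b * y) * physHermite 1 (y + c))
          = fun y : ℝ => 2 * (y * (Real.exp (-a * y ^ 2 + b * y) * physHermite 0 (y + c)))
            + (2 * c) * (Real.exp (-a * y ^ 2 + b * y) * physHermite 0 (y + c)) := by
        funext y
        simp only [physHermite]
        ring
      rw [hsplit, MeasureTheory.integral_add ((integrable_y_gauss_herm ha0 b c 0).const_mul 2)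
        ((integrable_gauss_herm ha0 b c 0).const_mul (2*c)),
        MeasureTheory.integral_const_mul, MeasureTheory.integral_const_mul]
      have hIy : (∫ y : ℝ, y * (Real.exp (-a * y ^ 2 + b * y) * physHermite 0 (y + c)))
          = b * (∫ y : ℝ, Real.exp (-a * y ^ 2 + b * y) * physHermite 0 (y + c)) / (2 * a) := by
        rw [eq_div_iff (by positivity : (2 * a : ℝ) ≠ 0)]
        linarith [hm]
      rw [hIy, h0]
      simp only [physHermite, pow_zero, pow_one, mul_one]
      have hqinv : q * q⁻¹ = (1:ℝ) := mul_inv_cancel₀ (ne_of_gt hq0)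
      linear_combination (2 * (Real.sqrt (π / a) * Real.exp (b ^ 2 / (4 * a)))) * hw
        - (2 * b * Real.sqrt (π / a) * Real.exp (b ^ 2 / (4 * a)) * a⁻¹
          + 4 * c * Real.sqrt (π / a) * Real.exp (b ^ 2 / (4 * a))) * hqinv
  | n + 2 => by
      have ha0 : 0 < a := lt_trans one_pos ha
      have hq0 : 0 < Real.sqrt ((a - 1) / a) :=
        Real.sqrt_pos.2 (div_pos (by linarith) ha0)
      set q := Real.sqrt ((a - 1) / a) with hqdef
      have hq2 : q ^ 2 = (a - 1) / a := Real.sq_sqrt (le_of_lt (div_pos (by linarith) ha0))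
      set w := (b / (2 * a) + c) / q with hwdef
      have hw : q * w = b / (2 * a) + c := by
        rw [hwdef, mul_div_cancel₀]
        exact ne_of_gt hq0
      have h1 := key ha b c (n + 1)
      have h2 := key ha b c n
      have hm := moment ha0 b c (n + 1)
      rw [Nat.add_sub_cancel] at hm
      push_cast at hm
      have hsplit : (fun y : ℝ => Real.exp (-a * y ^ 2 + b * y) * physHermite (n + 2) (y + c))
          = fun y : ℝ => (2 * (y * (Real.exp (-a * y ^ 2 + b * y) * physHermite (n + 1) (y + c)))
              + (2 * c) * (Real.exp (-a * y ^ 2 + b * y) * physHermite (n + 1) (y + c)))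
            - (2 * ((n : ℝ) + 1)) * (Real.exp (-a * y ^ 2 + b * y) * physHermite n (y + c)) := by
        funext y
        simp only [physHermite]
        ring
      have hAB : Integrable (fun y : ℝ =>
          2 * (y * (Real.exp (-a * y ^ 2 + b * y) * physHermite (n + 1) (y + c)))
            + (2 * c) * (Real.exp (-a * y ^ 2 + b * y) * physHermite (n + 1) (y + c))) :=
        ((integrable_y_gauss_herm ha0 b c (n+1)).const_mul 2).add
          ((integrable_gauss_herm ha0 b c (n+1)).const_mul (2*c))
      rw [hsplit, MeasureTheory.integral_sub hAB ((integrable_gauss_herm ha0 b c n).const_mul _),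
        MeasureTheory.integral_add ((integrable_y_gauss_herm ha0 b c (n+1)).const_mul 2)
          ((integrable_gauss_herm ha0 b c (n+1)).const_mul (2*c)),
        MeasureTheory.integral_const_mul, MeasureTheory.integral_const_mul,
        MeasureTheory.integral_const_mul]
      have hIy : (∫ y : ℝ, y * (Real.exp (-a * y ^ 2 + b * y) * physHermite (n + 1) (y + c)))
          = (b * (∫ y : ℝ, Real.exp (-a * y ^ 2 + b * y) * physHermite (n + 1) (y + c))
              + 2 * ((n : ℝ) + 1) * ∫ y : ℝ, Real.exp (-a * y ^ 2 + b * y) * physHermite n (y + c))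
            / (2 * a) := by
        rw [eq_div_iff (by positivity : (2 * a : ℝ) ≠ 0)]
        linarith [hm]
      rw [hIy, h1, h2]
      have hH : physHermite (n + 2) w
          = 2 * w * physHermite (n + 1) w - 2 * ((n : ℝ) + 1) * physHermite n w := by
        simp only [physHermite]
      rw [hH, pow_add q n 1, pow_add q n 2, pow_one]
      have hainv : a * a⁻¹ = (1:ℝ) := mul_inv_cancel₀ (ne_of_gt ha0)
      have hqinv : q * q⁻¹ = (1:ℝ) := mul_inv_cancel₀ (ne_of_gt hq0)
      linear_combination (-2 * (Real.sqrt (π / a) * Real.exp (b ^ 2 / (4 * a))) * q ^ n * q *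
          physHermite (n + 1) w) * hw
        + (2 * ((n : ℝ) + 1) * (Real.sqrt (π / a) * Real.exp (b ^ 2 / (4 * a))) * q ^ n *
          physHermite n w) * hq2
        + (2 * ((n : ℝ) + 1) * (Real.sqrt (π / a) * Real.exp (b ^ 2 / (4 * a))) * q ^ n *
          physHermite n w) * hainv

lemma main (s : ℝ) (hs : s < 0) (n : ℕ) (t z x : ℝ) :
    (∫ y : ℝ, mehlerKer s x y * thetaFn n t z y) = thetaFn n (s + t) z x := by
  have hu0 : 0 < Real.exp s := Real.exp_pos s
  have hu1 : Real.exp s < 1 := by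
    rw [← Real.exp_zero]
    exact Real.exp_lt_exp.2 hs
  have h1u : 0 < 1 - Real.exp s ^ 2 := by nlinarith
  set a : ℝ := 1 / (1 - Real.exp s ^ 2) with hadef
  have ha : 1 < a := by
    rw [hadef, lt_div_iff₀ h1u, one_mul]
    nlinarith
  have ha0 : 0 < a := lt_trans one_pos ha
  set b : ℝ := 2 * x * Real.exp s / (1 - Real.exp s ^ 2) - z * Real.exp t with hbdef
  set c : ℝ := Real.cosh t * z with hcdef
  set K : ℝ := (π * (Real.exp (-s) - Real.exp s)) ^ (-(1 : ℝ) / 2) *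
      ((2 : ℝ) ^ n * Nat.factorial n * Real.sqrt π) ^ (-(1 : ℝ) / 2) *
      Real.exp (t * n - Real.sinh t * Real.cosh t * z ^ 2 / 2 - x ^ 2 / 2 - s / 2
        - Real.exp s ^ 2 * x ^ 2 / (1 - Real.exp s ^ 2) - (Real.cosh t * z) ^ 2 / 2) with hKdef
  have hsq : ∀ y : ℝ, (Real.exp (s/2) * x - Real.exp (-s/2) * y) ^ 2
      = Real.exp s * x ^ 2 - 2 * x * y + Real.exp (-s) * y ^ 2 := by
    intro y
    have h1 : Real.exp (s/2) * Real.exp (s/2) = Real.exp s := by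
      rw [← Real.exp_add]; congr 1; ring
    have h2 : Real.exp (-s/2) * Real.exp (-s/2) = Real.exp (-s) := by
      rw [← Real.exp_add]; congr 1; ring
    have h3 : Real.exp (s/2) * Real.exp (-s/2) = 1 := by
      rw [← Real.exp_add]
      rw [show s/2 + -s/2 = 0 by ring, Real.exp_zero]
    linear_combination (x^2) * h1 + (y^2) * h2 - (2*x*y) * h3
  have hpt : ∀ y : ℝ, mehlerKer s x y * thetaFn n t z y
      = K * (Real.exp (-a * y ^ 2 + b * y) * physHermite n (y + c)) := by
    intro y
    rw [mehlerKer, thetaFn, hermiteFn, hKdef]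
    have harg : (y ^ 2 - x ^ 2) / 2 - s / 2 -
          (Real.exp (s / 2) * x - Real.exp (-s / 2) * y) ^ 2 / (Real.exp (-s) - Real.exp s)
        + (t * n - Real.sinh t * (y * z + Real.cosh t * z ^ 2 / 2))
        + (-(y + Real.cosh t * z) ^ 2 / 2)
        = (t * n - Real.sinh t * Real.cosh t * z ^ 2 / 2 - x ^ 2 / 2 - s / 2
            - Real.exp s ^ 2 * x ^ 2 / (1 - Real.exp s ^ 2) - (Real.cosh t * z) ^ 2 / 2)
          + (-a * y ^ 2 + b * y) := by
      have hD : Real.exp (-s) - Real.exp s = (1 - Real.exp s ^ 2) / Real.exp s := by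
        rw [Real.exp_neg]
        field_simp
      rw [hsq y, hadef, hbdef, hD, div_div_eq_mul_div]
      simp only [Real.sinh_eq, Real.cosh_eq, Real.exp_neg]
      have hv0 : Real.exp t ≠ 0 := ne_of_gt (Real.exp_pos t)
      field_simp
      ring
    have hE : Real.exp ((y ^ 2 - x ^ 2) / 2 - s / 2 -
          (Real.exp (s / 2) * x - Real.exp (-s / 2) * y) ^ 2 / (Real.exp (-s) - Real.exp s))
        * Real.exp (t * n - Real.sinh t * (y * z + Real.cosh t * z ^ 2 / 2))
        * Real.exp (-(y + Real.cosh t * z) ^ 2 / 2)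
        = Real.exp (t * n - Real.sinh t * Real.cosh t * z ^ 2 / 2 - x ^ 2 / 2 - s / 2
            - Real.exp s ^ 2 * x ^ 2 / (1 - Real.exp s ^ 2) - (Real.cosh t * z) ^ 2 / 2)
          * Real.exp (-a * y ^ 2 + b * y) := by
      rw [← Real.exp_add, ← Real.exp_add, ← Real.exp_add, harg]
    rw [hcdef]
    linear_combination ((π * (Real.exp (-s) - Real.exp s)) ^ (-(1 : ℝ) / 2) *
      ((2 : ℝ) ^ n * Nat.factorial n * Real.sqrt π) ^ (-(1 : ℝ) / 2) *
      physHermite n (y + Real.cosh t * z)) * hE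
  simp only [hpt]
  rw [MeasureTheory.integral_const_mul, key ha b c n]
  have hqe : Real.sqrt ((a - 1) / a) = Real.exp s := by
    have : (a - 1) / a = Real.exp s ^ 2 := by
      rw [hadef]; field_simp [h1u.ne']; ring
    rw [this, Real.sqrt_sq hu0.le]
  have hwx : (b / (2 * a) + c) / Real.exp s = x + Real.cosh (s + t) * z := by
    rw [hbdef, hadef, hcdef]
    simp only [Real.cosh_eq, Real.exp_add, Real.exp_neg]
    have hv0 : Real.exp t ≠ 0 := ne_of_gt (Real.exp_pos t)
    field_simp
    ring
  rw [hqe, hwx]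
  -- scalar identity
  have hA : 0 < π * (Real.exp (-s) - Real.exp s) := by
    apply mul_pos Real.pi_pos
    rw [Real.exp_neg]
    have h := mul_inv_cancel₀ (ne_of_gt hu0)
    nlinarith [h]
  have hP : (π * (Real.exp (-s) - Real.exp s)) ^ (-(1 : ℝ) / 2)
      = (Real.sqrt (π * (Real.exp (-s) - Real.exp s)))⁻¹ := by
    rw [show (-(1:ℝ)/2) = -(1/2 : ℝ) by norm_num, Real.rpow_neg hA.le, Real.sqrt_eq_rpow]
  have hsqrtcomb : Real.sqrt (π / a) * (Real.sqrt (π * (Real.exp (-s) - Real.exp s)))⁻¹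
      = Real.exp (s / 2) := by
    rw [← div_eq_mul_inv, ← Real.sqrt_div (by positivity : (0:ℝ) ≤ π / a)]
    rw [show π / a / (π * (Real.exp (-s) - Real.exp s)) = Real.exp s by
      rw [hadef, Real.exp_neg]
      have h2 : (Real.exp s)⁻¹ - Real.exp s = (1 - Real.exp s ^ 2) / Real.exp s := by
        field_simp
      rw [h2, div_eq_iff (by positivity : π * ((1 - Real.exp s ^ 2) / Real.exp s) ≠ 0)]
      field_simp]
    exact (Real.exp_half s).symm
  have hexpn : Real.exp s ^ n = Real.exp (s * n) := by
    rw [mul_comm s (n:ℝ), Real.exp_nat_mul]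
  rw [hKdef, thetaFn, hermiteFn, hP, hexpn]
  have hscal : Real.exp (s / 2)
        * Real.exp (t * n - Real.sinh t * Real.cosh t * z ^ 2 / 2 - x ^ 2 / 2 - s / 2
          - Real.exp s ^ 2 * x ^ 2 / (1 - Real.exp s ^ 2) - (Real.cosh t * z) ^ 2 / 2)
        * Real.exp (b ^ 2 / (4 * a)) * Real.exp (s * n)
      = Real.exp ((s + t) * n - Real.sinh (s + t) * (x * z + Real.cosh (s + t) * z ^ 2 / 2))
        * Real.exp (-(x + Real.cosh (s + t) * z) ^ 2 / 2) := by
    rw [← Real.exp_add, ← Real.exp_add, ← Real.exp_add, ← Real.exp_add]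
    congr 1
    rw [hbdef, hadef]
    simp only [Real.sinh_eq, Real.cosh_eq, Real.exp_add, Real.exp_neg]
    have hv0 : Real.exp t ≠ 0 := ne_of_gt (Real.exp_pos t)
    field_simp
    ring
  linear_combination (((2:ℝ) ^ n * Nat.factorial n * Real.sqrt π) ^ (-(1 : ℝ) / 2)
      * physHermite n (x + Real.cosh (s + t) * z)) * hscal
    + (((2:ℝ) ^ n * Nat.factorial n * Real.sqrt π) ^ (-(1 : ℝ) / 2)
      * physHermite n (x + Real.cosh (s + t) * z) * Real.exp
        (t * n - Real.sinh t * Real.cosh t * z ^ 2 / 2 - x ^ 2 / 2 - s / 2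
          - Real.exp s ^ 2 * x ^ 2 / (1 - Real.exp s ^ 2) - (Real.cosh t * z) ^ 2 / 2)
      * Real.exp (b ^ 2 / (4 * a)) * Real.exp (s * n)) * hsqrtcomb
    + 0

theorem stmt2 (s : ℝ) (hs : s < 0) (n : ℕ) (t z x : ℝ) :
    (∫ y : ℝ, mehlerKer s x y * thetaFn n t z y) = thetaFn n (s + t) z x ∧
      (∫ y : ℝ, mehlerKer s x y * hermiteFn n (y + z)) =
        Real.exp (s * n - Real.sinh s * (x * z + Real.cosh s * z ^ 2 / 2)) *
          hermiteFn n (x + Real.cosh s * z) := by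
  refine ⟨main s hs n t z x, ?_⟩
  have h := main s hs n 0 z x
  rw [add_zero] at h
  have hth : ∀ y : ℝ, thetaFn n 0 z y = hermiteFn n (y + z) := by
    intro y
    rw [thetaFn]
    simp [Real.sinh_zero, Real.cosh_zero]
  simp only [hth] at h
  rw [h, thetaFn]
end

section
/- For every integer N ≥ 1, every t ∈ ℝ and all x, y ∈ ℝ, with s(t) = sinh(t/2) and c(t) = cosh(t/2), one has ∑_{n=0}^{N−1} e^{tn} φ_n(x) φ_n(y) = √(N/2) · e^{t(N − 1/2)} ∫_0^∞ e^{−s(t)((x+y)z + c(t)z²)} [ φ_N(x + c(t)z) φ_{N−1}(y + c(t)z) + φ_{N−1}(x + c(t)z) φ_N(y + c(t)z) ] dz. -/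
open Real MeasureTheory

noncomputable def hCoef (n : ℕ) : ℝ :=
  ((2 : ℝ) ^ n * Nat.factorial n * Real.sqrt Real.pi) ^ (-(1 : ℝ) / 2)

lemma hCoef_pos (n : ℕ) : 0 < hCoef n := by
  apply Real.rpow_pos_of_pos
  positivity

lemma hCoef_succ (n : ℕ) : hCoef n = Real.sqrt (2 * ((n : ℝ) + 1)) * hCoef (n + 1) := by
  have hb : (0:ℝ) < (2 : ℝ) ^ n * Nat.factorial n * Real.sqrt Real.pi := by positivity
  have ha : (0:ℝ) < 2 * ((n : ℝ) + 1) := by positivity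
  have : hCoef (n+1) = (2 * ((n : ℝ) + 1)) ^ (-(1:ℝ)/2) * hCoef n := by
    rw [hCoef, hCoef, ← Real.mul_rpow ha.le hb.le]
    congr 1
    push_cast [pow_succ, Nat.factorial_succ]
    ring
  rw [this, Real.sqrt_eq_rpow, ← mul_assoc, ← Real.rpow_add ha]
  norm_num

lemma physHermite_succ (n : ℕ) (x : ℝ) :
    physHermite (n + 1) x = 2 * x * physHermite n x - 2 * (n : ℝ) * physHermite (n - 1) x := by
  match n with
  | 0 => simp [physHermite]
  | m + 1 => simp [physHermite]

lemma hasDerivAt_physHermite (n : ℕ) (x : ℝ) :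
    HasDerivAt (fun y => physHermite n y) (2 * (n : ℝ) * physHermite (n - 1) x) x := by
  induction n using Nat.strong_induction_on generalizing x with
  | _ n ih =>
    match n with
    | 0 => simpa [physHermite] using hasDerivAt_const x (1:ℝ)
    | 1 =>
      have : HasDerivAt (fun y : ℝ => 2 * y) 2 x := by simpa using (hasDerivAt_id x).const_mul 2
      simpa [physHermite] using this
    | m + 2 =>
      have h1 := ih (m+1) (by omega) x
      have h0 := ih m (by omega) x
      have hx : HasDerivAt (fun y : ℝ => y) 1 x := hasDerivAt_id x
      have hmul : HasDerivAt (fun y : ℝ => 2 * y * physHermite (m+1) y)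
          (2 * physHermite (m+1) x + 2 * x * (2 * ((m+1 : ℕ) : ℝ) * physHermite ((m+1) - 1) x)) x := by
        simpa [mul_comm, mul_assoc, mul_left_comm] using ((hx.const_mul 2).fun_mul h1)
      have h := hmul.fun_sub (h0.const_mul (2 * ((m : ℝ) + 1)))
      have hfun : (fun y => physHermite (m+2) y) =
          fun y => 2 * y * physHermite (m+1) y - 2 * ((m : ℝ) + 1) * physHermite m y := by
        funext y; simp [physHermite]
      rw [hfun]
      convert! h using 1
      have hrec := physHermite_succ m x
      have : (m + 2 - 1 : ℕ) = m + 1 := by omega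
      rw [this]
      simp only [Nat.add_sub_cancel]
      push_cast
      rw [hrec]
      ring


lemma hermiteFn_def (n : ℕ) (x : ℝ) :
    hermiteFn n x = hCoef n * physHermite n x * Real.exp (-x ^ 2 / 2) := rfl

noncomputable def dHF (n : ℕ) (w : ℝ) : ℝ :=
  hCoef n * (2 * (n : ℝ) * physHermite (n - 1) w - w * physHermite n w) * Real.exp (-w ^ 2 / 2)

lemma hasDerivAt_hermiteFn (n : ℕ) (w : ℝ) :
    HasDerivAt (fun x => hermiteFn n x) (dHF n w) w := by
  have he : HasDerivAt (fun x : ℝ => Real.exp (-x ^ 2 / 2)) (-w * Real.exp (-w ^ 2 / 2)) w := by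
    have h1 : HasDerivAt (fun x : ℝ => -x ^ 2 / 2) (-w) w := by
      have := (hasDerivAt_pow 2 w).fun_neg.div_const 2
      convert! this using 1
      norm_num; ring
    simpa [mul_comm] using h1.exp
  have h := (((hasDerivAt_physHermite n w).const_mul (hCoef n)).fun_mul he)
  have hfun : (fun x => hermiteFn n x)
      = fun x => hCoef n * physHermite n x * Real.exp (-x ^ 2 / 2) := rfl
  rw [hfun]
  convert! h using 1
  rw [dHF]
  ring

lemma sqrt_hCoef_n (k : ℕ) :
    Real.sqrt (((k : ℝ) + 1) / 2) * hCoef k = ((k : ℝ) + 1) * hCoef (k + 1) := by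
  rw [hCoef_succ k, ← mul_assoc, ← Real.sqrt_mul (by positivity)]
  have : ((k : ℝ) + 1) / 2 * (2 * ((k : ℝ) + 1)) = ((k : ℝ) + 1) ^ 2 := by ring
  rw [this, Real.sqrt_sq (by positivity)]

lemma sqrt_hCoef_half (k : ℕ) :
    Real.sqrt (((k : ℝ) + 1) / 2) * hCoef (k + 1) = hCoef k / 2 := by
  rw [hCoef_succ k]
  have : Real.sqrt (2 * ((k : ℝ) + 1)) = 2 * Real.sqrt (((k : ℝ) + 1) / 2) := by
    rw [show (2 * ((k : ℝ) + 1)) = 2 ^ 2 * (((k : ℝ) + 1) / 2) by ring,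
      Real.sqrt_mul (by positivity), Real.sqrt_sq (by norm_num)]
  rw [this]; ring

lemma key1 (t : ℝ) (n : ℕ) (w : ℝ) :
    Real.cosh (t/2) * dHF n w - Real.sinh (t/2) * w * hermiteFn n w
    = Real.exp (-(t/2)) * Real.sqrt ((n : ℝ)/2) * hermiteFn (n-1) w
      - Real.exp (t/2) * Real.sqrt (((n : ℝ)+1)/2) * hermiteFn (n+1) w := by
  match n with
  | 0 =>
    have e2 : Real.sqrt ((0+1)/2) * hCoef 1 = hCoef 0 / 2 := by
      have := sqrt_hCoef_half 0; push_cast at this ⊢; simpa using this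
    have e3 := Real.cosh_add_sinh (t/2)
    simp only [hermiteFn_def, dHF, physHermite, Nat.cast_zero, Nat.zero_sub, Nat.cast_ofNat,
      zero_div, Real.sqrt_zero, Nat.sub_self]
    push_cast
    linear_combination (-(w * hCoef 0 * Real.exp (-w^2/2))) * e3
      + (2*Real.exp (t/2)*w*Real.exp (-w^2/2)) * e2
  | m + 1 =>
    have e1 := sqrt_hCoef_n m
    have e2 := sqrt_hCoef_half (m+1)
    have e3 := Real.cosh_add_sinh (t/2)
    have e4 := Real.cosh_sub_sinh (t/2)
    push_cast at e1 e2
    have hsub : (m + 1 - 1 : ℕ) = m := by omega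
    simp only [hermiteFn_def, dHF, hsub, Nat.add_sub_cancel]
    rw [physHermite_succ (m+1) w]
    simp only [Nat.add_sub_cancel]
    push_cast
    linear_combination
      (-(Real.exp (-(t/2)) * physHermite m w * Real.exp (-w^2/2))) * e1
      + (Real.exp (t/2) * (2*w*physHermite (m+1) w - 2*((m:ℝ)+1)*physHermite m w) * Real.exp (-w^2/2)) * e2
      + ((((m:ℝ)+1)*physHermite m w - w*physHermite (m+1) w) * hCoef (m+1) * Real.exp (-w^2/2)) * e3
      + (((m:ℝ)+1) * physHermite m w * hCoef (m+1) * Real.exp (-w^2/2)) * e4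

noncomputable def aTerm (t u v : ℝ) (n : ℕ) : ℝ :=
  Real.exp (t * ((n : ℝ) - 1/2)) * Real.sqrt ((n : ℝ)/2) *
    (hermiteFn n u * hermiteFn (n-1) v + hermiteFn (n-1) u * hermiteFn n v)

lemma aTerm_zero (t u v : ℝ) : aTerm t u v 0 = 0 := by simp [aTerm]

lemma key2 (t u v : ℝ) (n : ℕ) :
    Real.exp (t * n) * (Real.cosh (t/2) * (dHF n u * hermiteFn n v + hermiteFn n u * dHF n v)
      - Real.sinh (t/2) * (u + v) * (hermiteFn n u * hermiteFn n v))
    = aTerm t u v n - aTerm t u v (n+1) := by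
  have k1u := key1 t n u
  have k1v := key1 t n v
  have hE1 : Real.exp (t * n) * Real.exp (-(t/2)) = Real.exp (t * ((n:ℝ) - 1/2)) := by
    rw [← Real.exp_add]; ring_nf
  have hE2 : Real.exp (t * n) * Real.exp (t/2) = Real.exp (t * (((n:ℝ) + 1) - 1/2)) := by
    rw [← Real.exp_add]; ring_nf
  simp only [aTerm, Nat.add_sub_cancel]
  push_cast
  linear_combination (Real.exp (t*n) * hermiteFn n v) * k1u
    + (Real.exp (t*n) * hermiteFn n u) * k1v
    + (Real.sqrt ((n:ℝ)/2) * (hermiteFn (n-1) u * hermiteFn n v + hermiteFn n u * hermiteFn (n-1) v)) * hE1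
    + (-(Real.sqrt (((n:ℝ)+1)/2) * (hermiteFn (n+1) u * hermiteFn n v + hermiteFn n u * hermiteFn (n+1) v))) * hE2

lemma telesum (t u v : ℝ) (N : ℕ) :
    ∑ n ∈ Finset.range N,
      Real.exp (t * n) * (Real.cosh (t/2) * (dHF n u * hermiteFn n v + hermiteFn n u * dHF n v)
        - Real.sinh (t/2) * (u + v) * (hermiteFn n u * hermiteFn n v))
    = - aTerm t u v N := by
  have : ∀ n ∈ Finset.range N, Real.exp (t * n) *
      (Real.cosh (t/2) * (dHF n u * hermiteFn n v + hermiteFn n u * dHF n v)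
        - Real.sinh (t/2) * (u + v) * (hermiteFn n u * hermiteFn n v))
      = aTerm t u v n - aTerm t u v (n+1) := fun n _ => key2 t u v n
  rw [Finset.sum_congr rfl this, Finset.sum_range_sub' (aTerm t u v), aTerm_zero]
  ring

lemma physHermite_poly (n : ℕ) : ∃ p : Polynomial ℝ, ∀ x, physHermite n x = p.eval x := by
  induction n using Nat.strong_induction_on with
  | _ n ih =>
    match n with
    | 0 => exact ⟨1, by simp [physHermite]⟩
    | 1 => exact ⟨Polynomial.C 2 * Polynomial.X, by simp [physHermite]⟩
    | m + 2 =>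
      obtain ⟨p1, hp1⟩ := ih (m+1) (by omega)
      obtain ⟨p0, hp0⟩ := ih m (by omega)
      refine ⟨Polynomial.C 2 * Polynomial.X * p1 - Polynomial.C (2*((m:ℝ)+1)) * p0, fun x => ?_⟩
      simp [physHermite, hp1 x, hp0 x]

lemma exp_quad_le (a b z : ℝ) (ha : 0 < a) :
    Real.exp (-a*z^2 + b*z) ≤ Real.exp (b^2/(2*a)) * Real.exp (-(a/2)*z^2) := by
  rw [← Real.exp_add, Real.exp_le_exp]
  have h : b^2/(2*a) + (-(a/2)*z^2) - (-a*z^2 + b*z) = (a*z - b)^2/(2*a) := by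
    field_simp; ring
  nlinarith [div_nonneg (sq_nonneg (a*z - b)) (by positivity : (0:ℝ) ≤ 2*a)]

lemma integrableOn_pow_exp (a b : ℝ) (ha : 0 < a) (k : ℕ) :
    IntegrableOn (fun z : ℝ => z^k * Real.exp (-a*z^2 + b*z)) (Set.Ioi 0) := by
  have hcont : Continuous (fun z : ℝ => z^k * Real.exp (-a*z^2 + b*z)) := by
    continuity
  refine Integrable.mono'
    ((integrableOn_rpow_mul_exp_neg_mul_sq (b := a/2) (half_pos ha)
      (s := (k:ℝ)) (lt_of_lt_of_le (by norm_num) (Nat.cast_nonneg k))).const_mul (Real.exp (b^2/(2*a))))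
    hcont.aestronglyMeasurable ?_
  filter_upwards [ae_restrict_mem measurableSet_Ioi] with z hz
  have hz0 : (0:ℝ) < z := hz
  rw [Real.norm_eq_abs, abs_mul, abs_of_nonneg (pow_nonneg hz0.le k),
    abs_of_nonneg (Real.exp_pos _).le]
  calc z^k * Real.exp (-a*z^2 + b*z)
      ≤ z^k * (Real.exp (b^2/(2*a)) * Real.exp (-(a/2)*z^2)) := by
        exact mul_le_mul_of_nonneg_left (exp_quad_le a b z ha) (pow_nonneg hz0.le k)
    _ = Real.exp (b^2/(2*a)) * (z ^ (k:ℝ) * Real.exp (-(a/2)*z^2)) := by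
        rw [Real.rpow_natCast]; ring

lemma integrableOn_poly_exp (a b : ℝ) (ha : 0 < a) (p : Polynomial ℝ) :
    IntegrableOn (fun z : ℝ => p.eval z * Real.exp (-a*z^2 + b*z)) (Set.Ioi 0) := by
  have hfun : (fun z : ℝ => p.eval z * Real.exp (-a*z^2 + b*z))
      = fun z : ℝ => ∑ i ∈ Finset.range (p.natDegree + 1),
          p.coeff i * (z^i * Real.exp (-a*z^2 + b*z)) := by
    funext z
    rw [Polynomial.eval_eq_sum_range, Finset.sum_mul]
    congr 1; funext i; ring
  rw [hfun]
  exact integrable_finset_sum _ fun i _ => (integrableOn_pow_exp a b ha i).const_mul _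

lemma tendsto_pow_exp (a b : ℝ) (ha : 0 < a) (k : ℕ) :
    Filter.Tendsto (fun z : ℝ => z^k * Real.exp (-a*z^2 + b*z)) Filter.atTop (nhds 0) := by
  have hq : Filter.Tendsto (fun z : ℝ => -a*z^2 + (b+k)*z) Filter.atTop Filter.atBot := by
    have h1 : (fun z : ℝ => -a*z^2 + (b+k)*z) = fun z : ℝ => z * (-a*z + (b+k)) := by
      funext z; ring
    rw [h1]
    apply Filter.Tendsto.atTop_mul_atBot₀ Filter.tendsto_id
    apply Filter.tendsto_atBot_add_const_right
    exact Filter.Tendsto.const_mul_atTop_of_neg (neg_neg_iff_pos.mpr ha) Filter.tendsto_id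
  have hg : Filter.Tendsto (fun z : ℝ => Real.exp (-a*z^2 + (b+k)*z)) Filter.atTop (nhds 0) :=
    Real.tendsto_exp_atBot.comp hq
  apply squeeze_zero' ?_ ?_ hg
  · filter_upwards [Filter.eventually_ge_atTop (0:ℝ)] with z hz
    positivity
  · filter_upwards [Filter.eventually_ge_atTop (1:ℝ)] with z hz
    have hz0 : (0:ℝ) ≤ z := by linarith
    have hk : z^k ≤ Real.exp (k*z) := by
      calc z^k ≤ (Real.exp z)^k := pow_le_pow_left₀ hz0 (by linarith [Real.add_one_le_exp z]) k
        _ = Real.exp (k*z) := by rw [← Real.exp_nat_mul]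
    calc z^k * Real.exp (-a*z^2 + b*z) ≤ Real.exp (k*z) * Real.exp (-a*z^2 + b*z) :=
          mul_le_mul_of_nonneg_right hk (Real.exp_pos _).le
      _ = Real.exp (-a*z^2 + (b+k)*z) := by rw [← Real.exp_add]; ring_nf

lemma tendsto_poly_exp (a b : ℝ) (ha : 0 < a) (p : Polynomial ℝ) :
    Filter.Tendsto (fun z : ℝ => p.eval z * Real.exp (-a*z^2 + b*z)) Filter.atTop (nhds 0) := by
  have hfun : (fun z : ℝ => p.eval z * Real.exp (-a*z^2 + b*z))
      = fun z : ℝ => ∑ i ∈ Finset.range (p.natDegree + 1),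
          p.coeff i * (z^i * Real.exp (-a*z^2 + b*z)) := by
    funext z
    rw [Polynomial.eval_eq_sum_range, Finset.sum_mul]
    congr 1; funext i; ring
  rw [hfun]
  have := tendsto_finset_sum (Finset.range (p.natDegree + 1))
    (fun i _ => (tendsto_pow_exp a b ha i).const_mul (p.coeff i))
  simpa using this

lemma form (t x y : ℝ) (i j : ℕ) : ∃ p : Polynomial ℝ, ∀ z : ℝ,
    Real.exp (-(Real.sinh (t/2)) * ((x+y)*z + Real.cosh (t/2)*z^2)) *
      (hermiteFn i (x + Real.cosh (t/2)*z) * hermiteFn j (y + Real.cosh (t/2)*z))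
    = p.eval z * Real.exp (-(Real.cosh (t/2)*(Real.cosh (t/2)+Real.sinh (t/2)))*z^2
        + (-((Real.cosh (t/2)+Real.sinh (t/2))*(x+y)))*z) := by
  obtain ⟨pi, hpi⟩ := physHermite_poly i
  obtain ⟨pj, hpj⟩ := physHermite_poly j
  refine ⟨Polynomial.C (hCoef i * hCoef j * Real.exp (-(x^2+y^2)/2)) *
    (pi.comp (Polynomial.C x + Polynomial.C (Real.cosh (t/2)) * Polynomial.X)) *
    (pj.comp (Polynomial.C y + Polynomial.C (Real.cosh (t/2)) * Polynomial.X)), fun z => ?_⟩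
  simp only [Polynomial.eval_mul, Polynomial.eval_comp, Polynomial.eval_add, Polynomial.eval_C,
    Polynomial.eval_X]
  rw [hermiteFn_def, hermiteFn_def, hpi, hpj]
  have hexp : Real.exp (-(Real.sinh (t/2)) * ((x+y)*z + Real.cosh (t/2)*z^2)) *
      Real.exp (-(x + Real.cosh (t/2)*z)^2/2) * Real.exp (-(y + Real.cosh (t/2)*z)^2/2)
      = Real.exp (-(x^2+y^2)/2) *
        Real.exp (-(Real.cosh (t/2)*(Real.cosh (t/2)+Real.sinh (t/2)))*z^2
          + (-((Real.cosh (t/2)+Real.sinh (t/2))*(x+y)))*z) := by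
    rw [← Real.exp_add, ← Real.exp_add, ← Real.exp_add]
    congr 1
    ring
  linear_combination (hCoef i * hCoef j * Polynomial.eval (x + Real.cosh (t/2)*z) pi *
    Polynomial.eval (y + Real.cosh (t/2)*z) pj) * hexp

lemma hasDerivAt_Phi (t x y : ℝ) (N : ℕ) (z : ℝ) :
    HasDerivAt (fun z => Real.exp (-(Real.sinh (t/2)) * ((x+y)*z + Real.cosh (t/2)*z^2)) *
      ∑ n ∈ Finset.range N, Real.exp (t*n) *
        (hermiteFn n (x + Real.cosh (t/2)*z) * hermiteFn n (y + Real.cosh (t/2)*z)))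
    (Real.exp (-(Real.sinh (t/2)) * ((x+y)*z + Real.cosh (t/2)*z^2)) *
      (- aTerm t (x + Real.cosh (t/2)*z) (y + Real.cosh (t/2)*z) N)) z := by
  set s := Real.sinh (t/2) with hs
  set c := Real.cosh (t/2) with hc
  have hF : HasDerivAt (fun z : ℝ => Real.exp (-s * ((x+y)*z + c*z^2)))
      (-s * ((x+y) + c*(2*z)) * Real.exp (-s * ((x+y)*z + c*z^2))) z := by
    have hin : HasDerivAt (fun z : ℝ => -s * ((x+y)*z + c*z^2)) (-s * ((x+y) + c*(2*z))) z := by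
      have h1 : HasDerivAt (fun z : ℝ => (x+y)*z + c*z^2) ((x+y) + c*(2*z)) z := by
        have ha : HasDerivAt (fun z : ℝ => (x+y)*z) (x+y) z := by
          simpa using (hasDerivAt_id z).const_mul (x+y)
        have hb : HasDerivAt (fun z : ℝ => c*z^2) (c*(2*z)) z := by
          simpa using (hasDerivAt_pow 2 z).const_mul c
        exact ha.add hb
      exact h1.const_mul (-s)
    simpa [mul_comm] using hin.exp
  have hterm : ∀ (n : ℕ) (w : ℝ), HasDerivAt (fun z : ℝ => hermiteFn n (w + c*z))
      (c * dHF n (w + c*z)) z := by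
    intro n w
    have hin : HasDerivAt (fun z : ℝ => w + c*z) c z := by
      simpa using ((hasDerivAt_id z).const_mul c).const_add w
    have := (hasDerivAt_hermiteFn n (w + c*z)).comp z hin
    simpa [Function.comp_def, mul_comm] using this
  have hS : HasDerivAt (fun z : ℝ => ∑ n ∈ Finset.range N, Real.exp (t*n) *
      (hermiteFn n (x + c*z) * hermiteFn n (y + c*z)))
      (∑ n ∈ Finset.range N, Real.exp (t*n) *
        (c * dHF n (x + c*z) * hermiteFn n (y + c*z)
          + hermiteFn n (x + c*z) * (c * dHF n (y + c*z)))) z := by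
    apply HasDerivAt.fun_sum
    intro n _
    exact (((hterm n x).fun_mul (hterm n y)).const_mul (Real.exp (t*n)))
  have hmul := hF.fun_mul hS
  convert! hmul using 1
  have ht := telesum t (x + c*z) (y + c*z) N
  have hsum : ∑ n ∈ Finset.range N, Real.exp (t*n) *
        (c * dHF n (x + c*z) * hermiteFn n (y + c*z)
          + hermiteFn n (x + c*z) * (c * dHF n (y + c*z)))
      - s * ((x + c*z) + (y + c*z)) * ∑ n ∈ Finset.range N, Real.exp (t*n) *
        (hermiteFn n (x + c*z) * hermiteFn n (y + c*z))
      = - aTerm t (x + c*z) (y + c*z) N := by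
    rw [← ht, Finset.mul_sum, ← Finset.sum_sub_distrib]
    apply Finset.sum_congr rfl
    intro n _
    ring
  set U := ∑ n ∈ Finset.range N, Real.exp (t*n) *
      (hermiteFn n (x + c*z) * hermiteFn n (y + c*z)) with hU
  set V := ∑ n ∈ Finset.range N, Real.exp (t*n) *
        (c * dHF n (x + c*z) * hermiteFn n (y + c*z)
          + hermiteFn n (x + c*z) * (c * dHF n (y + c*z))) with hV
  have : - aTerm t (x + c*z) (y + c*z) N = V - s * ((x + c*z) + (y + c*z)) * U := hsum.symm
  rw [this]
  ring

/-- Integral representation of the kernel e^{tD} K_N in terms of Hermite functions. -/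
theorem stmt3 (N : ℕ) (hN : 1 ≤ N) (t x y : ℝ) :
    ∑ n ∈ Finset.range N, Real.exp (t * n) * hermiteFn n x * hermiteFn n y =
      Real.sqrt ((N : ℝ) / 2) * Real.exp (t * ((N : ℝ) - 1 / 2)) *
        ∫ z in Set.Ioi (0 : ℝ),
          Real.exp (-(Real.sinh (t / 2)) * ((x + y) * z + Real.cosh (t / 2) * z ^ 2)) *
            (hermiteFn N (x + Real.cosh (t / 2) * z) *
                hermiteFn (N - 1) (y + Real.cosh (t / 2) * z) +
              hermiteFn (N - 1) (x + Real.cosh (t / 2) * z) *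
                hermiteFn N (y + Real.cosh (t / 2) * z)) := by
  set G : ℝ → ℝ := fun z =>
    Real.exp (-(Real.sinh (t / 2)) * ((x + y) * z + Real.cosh (t / 2) * z ^ 2)) *
      (hermiteFn N (x + Real.cosh (t / 2) * z) * hermiteFn (N - 1) (y + Real.cosh (t / 2) * z) +
        hermiteFn (N - 1) (x + Real.cosh (t / 2) * z) * hermiteFn N (y + Real.cosh (t / 2) * z))
    with hGdef
  set C : ℝ := Real.sqrt ((N : ℝ) / 2) * Real.exp (t * ((N : ℝ) - 1 / 2)) with hCdef
  set A : ℝ := Real.cosh (t/2) * (Real.cosh (t/2) + Real.sinh (t/2)) with hAdef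
  set B : ℝ := -((Real.cosh (t/2) + Real.sinh (t/2)) * (x+y)) with hBdef
  have hApos : 0 < A := by
    rw [hAdef, Real.cosh_add_sinh]
    positivity
  -- G is integrable
  obtain ⟨p1, hp1⟩ := form t x y N (N-1)
  obtain ⟨p2, hp2⟩ := form t x y (N-1) N
  have hGeq : G = fun z => (p1+p2).eval z * Real.exp (-A*z^2 + B*z) := by
    funext z
    rw [hGdef]
    simp only [Polynomial.eval_add, add_mul]
    rw [← hp1 z, ← hp2 z]
    ring
  have hGint : IntegrableOn G (Set.Ioi 0) := by
    rw [hGeq]; exact integrableOn_poly_exp A B hApos _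
  -- Φ and its limit
  set Φ : ℝ → ℝ := fun z =>
    Real.exp (-(Real.sinh (t/2)) * ((x+y)*z + Real.cosh (t/2)*z^2)) *
      ∑ n ∈ Finset.range N, Real.exp (t*n) *
        (hermiteFn n (x + Real.cosh (t/2)*z) * hermiteFn n (y + Real.cosh (t/2)*z)) with hΦdef
  choose p hp using fun n => form t x y n n
  have hΦeq : Φ = fun z =>
      (∑ n ∈ Finset.range N, Polynomial.C (Real.exp (t*n)) * p n).eval z *
        Real.exp (-A*z^2 + B*z) := by
    funext z
    rw [hΦdef]
    simp only [Polynomial.eval_finset_sum, Polynomial.eval_mul, Polynomial.eval_C,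
      Finset.sum_mul, Finset.mul_sum]
    apply Finset.sum_congr rfl
    intro n _
    rw [mul_assoc, ← hp n z]
    ring
  have hΦtend : Filter.Tendsto Φ Filter.atTop (nhds 0) := by
    rw [hΦeq]; exact tendsto_poly_exp A B hApos _
  -- derivative
  have hderiv : ∀ z ∈ Set.Ici (0:ℝ), HasDerivAt Φ (-C * G z) z := by
    intro z _
    have h := hasDerivAt_Phi t x y N z
    have heq : Real.exp (-(Real.sinh (t/2)) * ((x+y)*z + Real.cosh (t/2)*z^2)) *
        (- aTerm t (x + Real.cosh (t/2)*z) (y + Real.cosh (t/2)*z) N) = -C * G z := by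
      rw [hGdef, hCdef, aTerm]
      ring
    rw [heq] at h
    exact h
  have hint : IntegrableOn (fun z => -C * G z) (Set.Ioi 0) := hGint.const_mul _
  have key := integral_Ioi_of_hasDerivAt_of_tendsto' hderiv hint hΦtend
  rw [MeasureTheory.integral_const_mul] at key
  have hΦ0 : Φ 0 = ∑ n ∈ Finset.range N, Real.exp (t * n) * hermiteFn n x * hermiteFn n y := by
    rw [hΦdef]
    simp only [mul_zero, add_zero, zero_pow, ne_eq, OfNat.ofNat_ne_zero, not_false_eq_true,
      mul_zero, zero_add]
    norm_num
    apply Finset.sum_congr rfl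
    intro n _
    ring
  rw [hΦ0] at key
  have hIG : ∫ z in Set.Ioi (0:ℝ), G z =
      ∫ z in Set.Ioi (0:ℝ),
        Real.exp (-(Real.sinh (t / 2)) * ((x + y) * z + Real.cosh (t / 2) * z ^ 2)) *
          (hermiteFn N (x + Real.cosh (t / 2) * z) * hermiteFn (N - 1) (y + Real.cosh (t / 2) * z) +
            hermiteFn (N - 1) (x + Real.cosh (t / 2) * z) * hermiteFn N (y + Real.cosh (t / 2) * z)) := rfl
  linarith [key]
end

section
/- Fix r ∈ ℝ, L > 0 and t ∈ ℝ with t > −L, and define θ(z) = [4(z − r cosh(L)) / (√π (e^{2t} − e^{−2L})^{3/2})] · exp( −[2z²(e^{2t} + e^{−2L}) − 4rz e^{−L}(1 + e^{2t}) + r²(e^{2t} + 1)²] / (4(e^{2t} − e^{−2L})) − L + 2t ). Then for every n ∈ ℕ, ∫_ℝ φ_n(z) θ(z) dz = 2 e^{−r² cosh(t)²/2 − n(L+t)} [ φ_n'(r cosh(t)) + r sinh(t) φ_n(r cosh(t)) ]. -/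
open Real MeasureTheory

noncomputable def PH : ℕ → Polynomial ℝ
  | 0 => 1
  | 1 => Polynomial.C 2 * Polynomial.X
  | n + 2 => Polynomial.C 2 * Polynomial.X * PH (n + 1) - Polynomial.C (2 * ((n : ℝ) + 1)) * PH n

lemma physHermite_eval : ∀ (n : ℕ) (x : ℝ), physHermite n x = (PH n).eval x
  | 0, x => by simp [physHermite, PH]
  | 1, x => by simp [physHermite, PH]
  | (n + 2), x => by
    simp [physHermite, PH, physHermite_eval (n + 1), physHermite_eval n]

lemma PH_deriv : ∀ n : ℕ, (PH (n + 1)).derivative = Polynomial.C (2 * ((n : ℝ) + 1)) * PH n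
  | 0 => by simp [PH]
  | 1 => by
    show (PH 2).derivative = _
    simp only [PH]
    simp [Polynomial.derivative_mul]
    ring
  | (n + 2) => by
    show (PH (n + 3)).derivative = _
    rw [show PH (n+3) = Polynomial.C 2 * Polynomial.X * PH (n + 2)
        - Polynomial.C (2 * (((n:ℝ) + 1) + 1)) * PH (n + 1) from by simp [PH]]
    simp only [Polynomial.derivative_sub, Polynomial.derivative_mul, Polynomial.derivative_C,
      Polynomial.derivative_X, PH_deriv (n + 1), PH_deriv n]
    rw [show PH (n+2) = Polynomial.C 2 * Polynomial.X * PH (n + 1)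
        - Polynomial.C (2 * ((n:ℝ) + 1)) * PH n from by simp [PH]]
    push_cast
    simp only [map_add, map_mul, map_one, map_ofNat, Polynomial.C_1]
    ring

lemma exp_quad_eq (a b : ℝ) (ha : a ≠ 0) (x : ℝ) :
    Real.exp (-a * x ^ 2 + b * x)
      = Real.exp (b ^ 2 / (4 * a)) * Real.exp (-a * (x - b / (2 * a)) ^ 2) := by
  rw [← Real.exp_add]
  congr 1
  field_simp
  ring

lemma integrable_exp_quad {a : ℝ} (ha : 0 < a) (b : ℝ) :
    Integrable (fun x : ℝ => Real.exp (-a * x ^ 2 + b * x)) := by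
  have h : (fun x : ℝ => Real.exp (-a * x ^ 2 + b * x))
      = fun x => Real.exp (b ^ 2 / (4 * a)) * Real.exp (-a * (x - b / (2 * a)) ^ 2) := by
    funext x; exact exp_quad_eq a b ha.ne' x
  rw [h]
  exact (((integrable_exp_neg_mul_sq ha).comp_sub_right (b / (2 * a)))).const_mul _

lemma integral_exp_quad {a : ℝ} (ha : 0 < a) (b : ℝ) :
    ∫ x : ℝ, Real.exp (-a * x ^ 2 + b * x)
      = Real.sqrt (Real.pi / a) * Real.exp (b ^ 2 / (4 * a)) := by
  have h : ∀ x : ℝ, Real.exp (-a * x ^ 2 + b * x)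
      = Real.exp (b ^ 2 / (4 * a)) * Real.exp (-a * (x - b / (2 * a)) ^ 2) :=
    exp_quad_eq a b ha.ne'
  simp_rw [h]
  rw [MeasureTheory.integral_const_mul]
  rw [show ∫ x : ℝ, Real.exp (-a * (x - b / (2 * a)) ^ 2)
      = ∫ x : ℝ, Real.exp (-a * x ^ 2) from
    MeasureTheory.integral_sub_right_eq_self (fun x => Real.exp (-a * x ^ 2)) (b / (2 * a))]
  rw [integral_gaussian]
  ring

lemma abs_pow_le_factorial_mul_exp (x : ℝ) (k : ℕ) :
    |x| ^ k ≤ (k.factorial : ℝ) * Real.exp |x| := by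
  have h1 : |x| ^ k / (k.factorial : ℝ) ≤ Real.exp |x| := by
    refine le_trans ?_ (Real.sum_le_exp_of_nonneg (abs_nonneg x) (k + 1))
    refine Finset.single_le_sum (f := fun i => |x| ^ i / (i.factorial : ℝ)) ?_ ?_
    · intro i _
      positivity
    · simp
  have hk : (0 : ℝ) < k.factorial := by positivity
  calc |x| ^ k = |x| ^ k / (k.factorial : ℝ) * k.factorial := by field_simp
    _ ≤ Real.exp |x| * k.factorial := by
        exact mul_le_mul_of_nonneg_right h1 hk.le
    _ = (k.factorial : ℝ) * Real.exp |x| := by ring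

lemma integrable_pow_mul_exp_quad {a : ℝ} (ha : 0 < a) (b : ℝ) (k : ℕ) :
    Integrable (fun x : ℝ => x ^ k * Real.exp (-a * x ^ 2 + b * x)) := by
  have hg : Integrable (fun x : ℝ => (k.factorial : ℝ) *
      (Real.exp (-a * x ^ 2 + (b + 1) * x) + Real.exp (-a * x ^ 2 + (b - 1) * x))) :=
    ((integrable_exp_quad ha (b + 1)).add (integrable_exp_quad ha (b - 1))).const_mul _
  refine Integrable.mono' hg ?_ (Filter.Eventually.of_forall fun x => ?_)
  · exact (Continuous.aestronglyMeasurable (by fun_prop))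
  · have h1 : ‖x ^ k * Real.exp (-a * x ^ 2 + b * x)‖
        = |x| ^ k * Real.exp (-a * x ^ 2 + b * x) := by
      rw [norm_mul, norm_pow, Real.norm_eq_abs, Real.norm_eq_abs,
        Real.abs_exp]
    rw [h1]
    have h2 : |x| ^ k * Real.exp (-a * x ^ 2 + b * x)
        ≤ ((k.factorial : ℝ) * Real.exp |x|) * Real.exp (-a * x ^ 2 + b * x) :=
      mul_le_mul_of_nonneg_right (abs_pow_le_factorial_mul_exp x k) (Real.exp_pos _).le
    refine h2.trans ?_
    have h3 : Real.exp |x| ≤ Real.exp x + Real.exp (-x) := by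
      rcases abs_cases x with ⟨h, _⟩ | ⟨h, _⟩
      · rw [h]; exact le_add_of_nonneg_right (Real.exp_pos _).le
      · rw [h]; exact le_add_of_nonneg_left (Real.exp_pos _).le
    calc (k.factorial : ℝ) * Real.exp |x| * Real.exp (-a * x ^ 2 + b * x)
        ≤ (k.factorial : ℝ) * (Real.exp x + Real.exp (-x)) * Real.exp (-a * x ^ 2 + b * x) := by
          refine mul_le_mul_of_nonneg_right (mul_le_mul_of_nonneg_left h3 (by positivity))
            (Real.exp_pos _).le
      _ = (k.factorial : ℝ) *
          (Real.exp (-a * x ^ 2 + (b + 1) * x) + Real.exp (-a * x ^ 2 + (b - 1) * x)) := by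
          rw [mul_assoc, add_mul, ← Real.exp_add, ← Real.exp_add]
          ring_nf

lemma integrable_poly_mul_exp_quad {a : ℝ} (ha : 0 < a) (b : ℝ) (p : Polynomial ℝ) :
    Integrable (fun x : ℝ => p.eval x * Real.exp (-a * x ^ 2 + b * x)) := by
  induction p using Polynomial.induction_on' with
  | add p q hp hq =>
      refine (hp.add hq).congr (Filter.Eventually.of_forall fun x => ?_)
      simp [add_mul]
  | monomial n c =>
      simp only [Polynomial.eval_monomial]
      simpa [mul_assoc] using (integrable_pow_mul_exp_quad ha b n).const_mul c

lemma tendsto_pow_mul_exp_quad_atTop {a : ℝ} (ha : 0 < a) (b : ℝ) (k : ℕ) :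
    Filter.Tendsto (fun x : ℝ => x ^ k * Real.exp (-a * x ^ 2 + b * x))
      Filter.atTop (nhds 0) := by
  have hg : Filter.Tendsto (fun x : ℝ => (k.factorial : ℝ) * Real.exp (-x))
      Filter.atTop (nhds 0) := by
    simpa using (Real.tendsto_exp_atBot.comp Filter.tendsto_neg_atTop_atBot).const_mul
      (k.factorial : ℝ)
  refine squeeze_zero_norm' ?_ hg
  filter_upwards [Filter.eventually_ge_atTop (max 1 ((b + 2) / a))] with x hx
  have hx1 : (1 : ℝ) ≤ x := le_trans (le_max_left _ _) hx
  have hx2 : (b + 2) / a ≤ x := le_trans (le_max_right _ _) hx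
  have hxa : b + 2 ≤ x * a := (div_le_iff₀ ha).mp hx2
  have h1 : ‖x ^ k * Real.exp (-a * x ^ 2 + b * x)‖
      = |x| ^ k * Real.exp (-a * x ^ 2 + b * x) := by
    rw [norm_mul, norm_pow, Real.norm_eq_abs, Real.norm_eq_abs, Real.abs_exp]
  rw [h1]
  calc |x| ^ k * Real.exp (-a * x ^ 2 + b * x)
      ≤ ((k.factorial : ℝ) * Real.exp |x|) * Real.exp (-a * x ^ 2 + b * x) :=
        mul_le_mul_of_nonneg_right (abs_pow_le_factorial_mul_exp x k) (Real.exp_pos _).le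
    _ = (k.factorial : ℝ) * Real.exp (|x| + (-a * x ^ 2 + b * x)) := by
        rw [mul_assoc, ← Real.exp_add]
    _ ≤ (k.factorial : ℝ) * Real.exp (-x) := by
        refine mul_le_mul_of_nonneg_left (Real.exp_le_exp.mpr ?_) (by positivity)
        rw [abs_of_nonneg (by linarith : (0:ℝ) ≤ x)]
        nlinarith
lemma tendsto_pow_mul_exp_quad_atBot {a : ℝ} (ha : 0 < a) (b : ℝ) (k : ℕ) :
    Filter.Tendsto (fun x : ℝ => x ^ k * Real.exp (-a * x ^ 2 + b * x))
      Filter.atBot (nhds 0) := by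
  have h2 : Filter.Tendsto (fun x : ℝ => (-x) ^ k * Real.exp (-a * (-x) ^ 2 + (-b) * (-x)))
      Filter.atBot (nhds 0) :=
    (tendsto_pow_mul_exp_quad_atTop ha (-b) k).comp Filter.tendsto_neg_atBot_atTop
  have h3 := h2.const_mul ((-1 : ℝ) ^ k)
  rw [mul_zero] at h3
  refine h3.congr fun x => ?_
  have : (-1 : ℝ) ^ k * (-x) ^ k = x ^ k := by
    rw [← mul_pow]; norm_num
  calc ((-1 : ℝ) ^ k) * ((-x) ^ k * Real.exp (-a * (-x) ^ 2 + -b * -x))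
      = ((-1 : ℝ) ^ k * (-x) ^ k) * Real.exp (-a * x ^ 2 + b * x) := by ring_nf
    _ = x ^ k * Real.exp (-a * x ^ 2 + b * x) := by rw [this]

lemma tendsto_poly_mul_exp_quad {a : ℝ} (ha : 0 < a) (b : ℝ) (p : Polynomial ℝ)
    (l : Filter ℝ) (hl : l = Filter.atTop ∨ l = Filter.atBot) :
    Filter.Tendsto (fun x : ℝ => p.eval x * Real.exp (-a * x ^ 2 + b * x)) l (nhds 0) := by
  induction p using Polynomial.induction_on' with
  | add p q hp hq =>
      simpa [add_mul] using hp.add hq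
  | monomial n c =>
      have h : Filter.Tendsto (fun x : ℝ => x ^ n * Real.exp (-a * x ^ 2 + b * x)) l (nhds 0) := by
        rcases hl with rfl | rfl
        · exact tendsto_pow_mul_exp_quad_atTop ha b n
        · exact tendsto_pow_mul_exp_quad_atBot ha b n
      have h2 := h.const_mul c
      rw [mul_zero] at h2
      refine h2.congr fun x => ?_
      simp [Polynomial.eval_monomial]
      ring

lemma integral_deriv_eq_zero (f f' : ℝ → ℝ) (hd : ∀ x, HasDerivAt f (f' x) x)
    (hi : Integrable f')
    (htop : Filter.Tendsto f Filter.atTop (nhds 0))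
    (hbot : Filter.Tendsto f Filter.atBot (nhds 0)) :
    ∫ x : ℝ, f' x = 0 := by
  rw [← intervalIntegral.integral_Iic_add_Ioi (b := (0:ℝ)) hi.integrableOn hi.integrableOn]
  rw [MeasureTheory.integral_Iic_of_hasDerivAt_of_tendsto' (fun x _ => hd x)
    hi.integrableOn hbot]
  rw [MeasureTheory.integral_Ioi_of_hasDerivAt_of_tendsto' (fun x _ => hd x)
    hi.integrableOn htop]
  ring

lemma integral_deriv_poly_mul_exp_quad {a : ℝ} (ha : 0 < a) (b : ℝ) (p : Polynomial ℝ) :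
    ∫ x : ℝ, (p.derivative.eval x + p.eval x * (b - 2 * a * x)) * Real.exp (-a * x ^ 2 + b * x)
      = 0 := by
  have key : ∀ x : ℝ, HasDerivAt (fun y => p.eval y * Real.exp (-a * y ^ 2 + b * y))
      ((p.derivative.eval x + p.eval x * (b - 2 * a * x)) * Real.exp (-a * x ^ 2 + b * x)) x := by
    intro x
    have h1 : HasDerivAt (fun y : ℝ => -a * y ^ 2 + b * y) (-a * (2 * x) + b) x := by
      have := ((hasDerivAt_pow 2 x).const_mul (-a)).add ((hasDerivAt_id x).const_mul b)
      refine this.congr_deriv ?_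
      simp
    have h2 := h1.exp
    have h3 := (p.hasDerivAt x).mul h2
    refine h3.congr_deriv ?_
    ring
  have hint : Integrable (fun x : ℝ =>
      (p.derivative.eval x + p.eval x * (b - 2 * a * x)) * Real.exp (-a * x ^ 2 + b * x)) := by
    have := integrable_poly_mul_exp_quad ha b
      (p.derivative + p * (Polynomial.C b - Polynomial.C (2 * a) * Polynomial.X))
    refine this.congr ?_
    · refine Filter.Eventually.of_forall fun x => ?_
      simp only [Polynomial.eval_add, Polynomial.eval_mul, Polynomial.eval_sub,
        Polynomial.eval_C, Polynomial.eval_X]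
  exact integral_deriv_eq_zero _ _ key hint
    (tendsto_poly_mul_exp_quad ha b p _ (Or.inl rfl))
    (tendsto_poly_mul_exp_quad ha b p _ (Or.inr rfl))

lemma step_alg (G lam x0 a b P0 P1 Lam c : ℝ) (ha : a ≠ 0) (hlam : a * lam ^ 2 = a - 1)
    (hb : b = 2 * a * lam * x0) :
    2 * ((b * (G * (Lam * lam) * P1) + 2 * c * (G * Lam * P0)) / (2 * a)) - 2 * c * (G * Lam * P0)
      = G * (Lam * lam ^ 2) * (2 * x0 * P1 - 2 * c * P0) := by
  subst hb
  field_simp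
  linear_combination (c * G * Lam * P0) * hlam

lemma rel_quad {a : ℝ} (ha : 0 < a) (b : ℝ) (p : Polynomial ℝ) :
    b * (∫ x : ℝ, p.eval x * Real.exp (-a * x ^ 2 + b * x))
      - 2 * a * (∫ x : ℝ, x * p.eval x * Real.exp (-a * x ^ 2 + b * x))
      + (∫ x : ℝ, p.derivative.eval x * Real.exp (-a * x ^ 2 + b * x)) = 0 := by
  have I1 : Integrable (fun x : ℝ => p.derivative.eval x * Real.exp (-a * x ^ 2 + b * x)) :=
    integrable_poly_mul_exp_quad ha b p.derivative
  have I2 : Integrable (fun x : ℝ => p.eval x * Real.exp (-a * x ^ 2 + b * x)) :=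
    integrable_poly_mul_exp_quad ha b p
  have I3 : Integrable (fun x : ℝ => x * p.eval x * Real.exp (-a * x ^ 2 + b * x)) := by
    refine (integrable_poly_mul_exp_quad ha b (Polynomial.X * p)).congr
      (Filter.Eventually.of_forall fun x => ?_)
    simp only [Polynomial.eval_mul, Polynomial.eval_X]
  have h0 := integral_deriv_poly_mul_exp_quad ha b p
  have hfun : (fun x : ℝ =>
      (p.derivative.eval x + p.eval x * (b - 2 * a * x)) * Real.exp (-a * x ^ 2 + b * x))
      = fun x : ℝ => p.derivative.eval x * Real.exp (-a * x ^ 2 + b * x) +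
          (b * (p.eval x * Real.exp (-a * x ^ 2 + b * x))
            - 2 * a * (x * p.eval x * Real.exp (-a * x ^ 2 + b * x))) := by
    funext x; ring
  have hsub : Integrable (fun x : ℝ => b * (p.eval x * Real.exp (-a * x ^ 2 + b * x))
      - 2 * a * (x * p.eval x * Real.exp (-a * x ^ 2 + b * x))) :=
    (I2.const_mul b).sub (I3.const_mul (2 * a))
  rw [hfun, MeasureTheory.integral_add I1 hsub] at h0
  rw [MeasureTheory.integral_sub (I2.const_mul b) (I3.const_mul (2 * a)),
    MeasureTheory.integral_const_mul, MeasureTheory.integral_const_mul] at h0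
  linarith

lemma J_closed {a b lam x0 : ℝ} (ha : 0 < a) (hlam : a * lam ^ 2 = a - 1)
    (hb : b = 2 * a * lam * x0) :
    ∀ n : ℕ, (∫ x : ℝ, (PH n).eval x * Real.exp (-a * x ^ 2 + b * x))
      = Real.sqrt (π / a) * Real.exp (b ^ 2 / (4 * a)) * lam ^ n * (PH n).eval x0
  | 0 => by
    simp only [PH, Polynomial.eval_one, one_mul, pow_zero, mul_one]
    rw [integral_exp_quad ha b]
  | 1 => by
    set G := Real.sqrt (π / a) * Real.exp (b ^ 2 / (4 * a)) with hG
    have h := rel_quad ha b (1 : Polynomial ℝ)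
    simp only [Polynomial.derivative_one, Polynomial.eval_zero, Polynomial.eval_one, one_mul,
      MeasureTheory.integral_zero, add_zero, zero_mul, mul_one] at h
    rw [integral_exp_quad ha b, ← hG] at h
    have hK : (∫ x : ℝ, x * Real.exp (-a * x ^ 2 + b * x)) = b * G / (2 * a) := by
      rw [eq_div_iff (by positivity : (2 : ℝ) * a ≠ 0)]
      linarith
    have he : (fun x : ℝ => (PH 1).eval x * Real.exp (-a * x ^ 2 + b * x))
        = fun x : ℝ => 2 * (x * Real.exp (-a * x ^ 2 + b * x)) := by
      funext x; simp [PH]; ring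
    rw [he, MeasureTheory.integral_const_mul, hK]
    simp only [PH, Polynomial.eval_mul, Polynomial.eval_C, Polynomial.eval_X]
    subst hb
    field_simp
  | (n + 2) => by
    have hJ0 := J_closed ha hlam hb n
    have hJ1 := J_closed ha hlam hb (n + 1)
    set G := Real.sqrt (π / a) * Real.exp (b ^ 2 / (4 * a)) with hG
    have h := rel_quad ha b (PH (n + 1))
    rw [PH_deriv n] at h
    have hd : (fun x : ℝ => (Polynomial.C (2 * ((n : ℝ) + 1)) * PH n).eval x
        * Real.exp (-a * x ^ 2 + b * x))
        = fun x : ℝ => (2 * ((n : ℝ) + 1)) * ((PH n).eval x * Real.exp (-a * x ^ 2 + b * x)) := by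
      funext x; simp [mul_assoc]
    rw [hd, MeasureTheory.integral_const_mul, hJ0, hJ1] at h
    have hcong : (∫ x : ℝ, x * ((PH (n + 1)).eval x * Real.exp (-a * x ^ 2 + b * x)))
        = ∫ x : ℝ, x * (PH (n + 1)).eval x * Real.exp (-a * x ^ 2 + b * x) := by
      congr 1; funext x; ring
    have hK : (∫ x : ℝ, x * ((PH (n + 1)).eval x * Real.exp (-a * x ^ 2 + b * x)))
        = (b * (G * (lam ^ n * lam) * (PH (n + 1)).eval x0)
            + 2 * ((n : ℝ) + 1) * (G * lam ^ n * (PH n).eval x0)) / (2 * a) := by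
      rw [hcong, eq_div_iff (by positivity : (2 : ℝ) * a ≠ 0)]
      rw [pow_succ] at h
      linarith [h]
    have he : (fun x : ℝ => (PH (n + 2)).eval x * Real.exp (-a * x ^ 2 + b * x))
        = fun x : ℝ => 2 * (x * ((PH (n + 1)).eval x * Real.exp (-a * x ^ 2 + b * x)))
            - (2 * ((n : ℝ) + 1)) * ((PH n).eval x * Real.exp (-a * x ^ 2 + b * x)) := by
      funext x
      simp only [PH, Polynomial.eval_sub, Polynomial.eval_mul, Polynomial.eval_C,
        Polynomial.eval_X]
      ring
    have I2 : Integrable (fun x : ℝ => (PH n).eval x * Real.exp (-a * x ^ 2 + b * x)) :=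
      integrable_poly_mul_exp_quad ha b (PH n)
    have I3 : Integrable (fun x : ℝ =>
        x * ((PH (n + 1)).eval x * Real.exp (-a * x ^ 2 + b * x))) := by
      refine (integrable_poly_mul_exp_quad ha b (Polynomial.X * PH (n + 1))).congr
        (Filter.Eventually.of_forall fun x => ?_)
      simp only [Polynomial.eval_mul, Polynomial.eval_X]
      ring
    rw [he, MeasureTheory.integral_sub (I3.const_mul 2) (I2.const_mul _),
      MeasureTheory.integral_const_mul, MeasureTheory.integral_const_mul, hJ0, hK]
    simp only [PH, Polynomial.eval_sub, Polynomial.eval_mul, Polynomial.eval_C,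
      Polynomial.eval_X]
    linear_combination step_alg G lam x0 a b ((PH n).eval x0) ((PH (n + 1)).eval x0)
      (lam ^ n) ((n : ℝ) + 1) ha.ne' hlam hb

lemma key_alg (G lam x0 a b m P D : ℝ) (ha : a ≠ 0) (hl : lam ≠ 0)
    (hlam : a * lam ^ 2 = a - 1) (hb : b = 2 * a * lam * x0) :
    (b * (G * P) + G * D / lam) / (2 * a) - m * (G * P)
      = G * ((lam * x0 - m) * P + (1 - lam ^ 2) / (2 * lam) * D) := by
  subst hb
  field_simp
  linear_combination (G * D) * hlam

lemma Jd_closed {a b lam x0 : ℝ} (ha : 0 < a) (hlam : a * lam ^ 2 = a - 1)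
    (hb : b = 2 * a * lam * x0) (hl : lam ≠ 0) (n : ℕ) :
    (∫ x : ℝ, ((PH n).derivative).eval x * Real.exp (-a * x ^ 2 + b * x))
      = Real.sqrt (π / a) * Real.exp (b ^ 2 / (4 * a)) * lam ^ n
          * ((PH n).derivative.eval x0) / lam := by
  cases n with
  | zero =>
      have : PH 0 = 1 := rfl
      simp [this]
  | succ n =>
      rw [PH_deriv n]
      have hd : (fun x : ℝ => (Polynomial.C (2 * ((n : ℝ) + 1)) * PH n).eval x
          * Real.exp (-a * x ^ 2 + b * x))
          = fun x : ℝ => (2 * ((n : ℝ) + 1)) * ((PH n).eval x * Real.exp (-a * x ^ 2 + b * x)) := by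
        funext x; simp [mul_assoc]
      rw [hd, MeasureTheory.integral_const_mul, J_closed ha hlam hb n]
      simp only [Polynomial.eval_mul, Polynomial.eval_C]
      field_simp
      ring

lemma key_integral {a b lam x0 : ℝ} (ha : 0 < a) (hlam : a * lam ^ 2 = a - 1)
    (hb : b = 2 * a * lam * x0) (hl : lam ≠ 0) (m : ℝ) (n : ℕ) :
    (∫ x : ℝ, (x - m) * (PH n).eval x * Real.exp (-a * x ^ 2 + b * x))
      = Real.sqrt (π / a) * Real.exp (b ^ 2 / (4 * a)) * lam ^ n *
          ((lam * x0 - m) * (PH n).eval x0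
            + (1 - lam ^ 2) / (2 * lam) * (PH n).derivative.eval x0) := by
  have I2 : Integrable (fun x : ℝ => (PH n).eval x * Real.exp (-a * x ^ 2 + b * x)) :=
    integrable_poly_mul_exp_quad ha b (PH n)
  have I3 : Integrable (fun x : ℝ => x * (PH n).eval x * Real.exp (-a * x ^ 2 + b * x)) := by
    refine (integrable_poly_mul_exp_quad ha b (Polynomial.X * PH n)).congr
      (Filter.Eventually.of_forall fun x => ?_)
    simp only [Polynomial.eval_mul, Polynomial.eval_X]
  have hsplit : (fun x : ℝ => (x - m) * (PH n).eval x * Real.exp (-a * x ^ 2 + b * x))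
      = fun x : ℝ => x * (PH n).eval x * Real.exp (-a * x ^ 2 + b * x)
          - m * ((PH n).eval x * Real.exp (-a * x ^ 2 + b * x)) := by
    funext x; ring
  have hsub : Integrable (fun x : ℝ => m * ((PH n).eval x * Real.exp (-a * x ^ 2 + b * x))) :=
    I2.const_mul m
  rw [hsplit, MeasureTheory.integral_sub I3 hsub, MeasureTheory.integral_const_mul,
    J_closed ha hlam hb n]
  have h := rel_quad ha b (PH n)
  rw [J_closed ha hlam hb n, Jd_closed ha hlam hb hl n] at h
  have hK : (∫ x : ℝ, x * (PH n).eval x * Real.exp (-a * x ^ 2 + b * x))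
      = (b * (Real.sqrt (π / a) * Real.exp (b ^ 2 / (4 * a)) * lam ^ n * (PH n).eval x0) + (Real.sqrt (π / a) * Real.exp (b ^ 2 / (4 * a)) * lam ^ n) * ((PH n).derivative.eval x0) / lam)
          / (2 * a) := by
    rw [eq_div_iff (by positivity : (2 : ℝ) * a ≠ 0)]
    linarith [h]
  rw [hK]
  linear_combination key_alg (Real.sqrt (π / a) * Real.exp (b ^ 2 / (4 * a)) * lam ^ n) lam x0 a b m ((PH n).eval x0)
    ((PH n).derivative.eval x0) ha.ne' hl hlam hb

lemma hermiteFn_hasDerivAt (n : ℕ) (x : ℝ) :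
    HasDerivAt (hermiteFn n)
      (((2 : ℝ) ^ n * Nat.factorial n * Real.sqrt Real.pi) ^ (-(1 : ℝ) / 2) *
        ((PH n).derivative.eval x - x * (PH n).eval x) * Real.exp (-x ^ 2 / 2)) x := by
  have hfn : hermiteFn n = fun y : ℝ =>
      ((2 : ℝ) ^ n * Nat.factorial n * Real.sqrt Real.pi) ^ (-(1 : ℝ) / 2) *
        ((PH n).eval y * Real.exp (-y ^ 2 / 2)) := by
    funext y; rw [hermiteFn, physHermite_eval n y]; ring
  rw [hfn]
  have h1 : HasDerivAt (fun y : ℝ => -y ^ 2 / 2) (-x) x := by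
    have := (hasDerivAt_pow 2 x).const_mul (-(1 : ℝ) / 2)
    have heq : (fun y : ℝ => -(1 : ℝ) / 2 * y ^ 2) = fun y : ℝ => -y ^ 2 / 2 := by
      funext y; ring
    rw [heq] at this
    refine this.congr_deriv ?_
    simp
    ring
  have h2 := h1.exp
  have h3 := (((PH n).hasDerivAt x).mul h2).const_mul
    (((2 : ℝ) ^ n * Nat.factorial n * Real.sqrt Real.pi) ^ (-(1 : ℝ) / 2))
  refine h3.congr_deriv ?_
  ring

set_option maxHeartbeats 1000000 in
theorem stmt5 (r L t : ℝ) (hL : 0 < L) (ht : -L < t) (n : ℕ) :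
    (∫ z : ℝ, hermiteFn n z *
        (4 * (z - r * Real.cosh L) /
            (Real.sqrt Real.pi * (Real.exp (2 * t) - Real.exp (-(2 * L))) ^ ((3 : ℝ) / 2)) *
          Real.exp (-(2 * z ^ 2 * (Real.exp (2 * t) + Real.exp (-(2 * L))) -
                4 * r * z * Real.exp (-L) * (1 + Real.exp (2 * t)) +
                r ^ 2 * (Real.exp (2 * t) + 1) ^ 2) /
              (4 * (Real.exp (2 * t) - Real.exp (-(2 * L)))) - L + 2 * t))) =
      2 * Real.exp (-(r ^ 2) * Real.cosh t ^ 2 / 2 - n * (L + t)) *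
        (deriv (hermiteFn n) (r * Real.cosh t) +
          r * Real.sinh t * hermiteFn n (r * Real.cosh t)) := by
  have hE : (0 : ℝ) < Real.exp t := Real.exp_pos t
  have hF : (0 : ℝ) < Real.exp L := Real.exp_pos L
  set E := Real.exp t with hEdef
  set F := Real.exp L with hFdef
  set S := Real.exp (2 * t) - Real.exp (-(2 * L)) with hSdef
  set aa := Real.exp (2 * t) / S with haadef
  set bb := r * Real.exp (-L) * (1 + Real.exp (2 * t)) / S with hbbdef
  set lam := Real.exp (-(L + t)) with hlamdef
  set x0 := r * Real.cosh t with hx0def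
  set mm := r * Real.cosh L with hmmdef
  set c0 := -(r ^ 2) * (Real.exp (2 * t) + 1) ^ 2 / (4 * S) - L + 2 * t with hc0def
  have e2t : Real.exp (2 * t) = E ^ 2 := by rw [two_mul, Real.exp_add]; ring
  have e2L : Real.exp (-(2 * L)) = (F ^ 2)⁻¹ := by
    rw [Real.exp_neg, two_mul, Real.exp_add, ← hFdef]; ring
  have eL : Real.exp (-L) = F⁻¹ := by rw [Real.exp_neg, ← hFdef]
  have echt : Real.cosh t = (E + E⁻¹) / 2 := by rw [Real.cosh_eq, Real.exp_neg, ← hEdef]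
  have esht : Real.sinh t = (E - E⁻¹) / 2 := by rw [Real.sinh_eq, Real.exp_neg, ← hEdef]
  have echL : Real.cosh L = (F + F⁻¹) / 2 := by rw [Real.cosh_eq, Real.exp_neg, ← hFdef]
  have hSEF : S = E ^ 2 - (F ^ 2)⁻¹ := by rw [hSdef, e2t, e2L]
  have hS : (0 : ℝ) < S := by
    rw [hSdef]
    have : Real.exp (-(2 * L)) < Real.exp (2 * t) := Real.exp_lt_exp.mpr (by linarith)
    linarith
  have haa : (0 : ℝ) < aa := by rw [haadef]; exact div_pos (Real.exp_pos _) hS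
  have hlam0 : (0 : ℝ) < lam := by rw [hlamdef]; exact Real.exp_pos _
  have hlamE : lam = (F * E)⁻¹ := by
    rw [hlamdef, Real.exp_neg, Real.exp_add, ← hEdef, ← hFdef]
  have hexpn : Real.exp (-(r ^ 2) * Real.cosh t ^ 2 / 2 - n * (L + t))
      = Real.exp (-(r ^ 2) * Real.cosh t ^ 2 / 2) * lam ^ n := by
    rw [hlamdef, ← Real.exp_nat_mul, ← Real.exp_add]
    congr 1
    ring
  clear_value E F S aa bb lam x0 mm c0
  have hSEF0 : E ^ 2 - (F ^ 2)⁻¹ ≠ 0 := by rw [← hSEF]; exact hS.ne'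
  have hEF1' : E ^ 2 * F ^ 2 - 1 = S * F ^ 2 := by rw [hSEF]; field_simp
  have hEF1 : E ^ 2 * F ^ 2 - 1 ≠ 0 := by
    rw [hEF1']; positivity
  have hlam : aa * lam ^ 2 = aa - 1 := by
    rw [haadef, hlamE, e2t, hSEF]
    field_simp
    ring
  have hb : bb = 2 * aa * lam * x0 := by
    rw [hbbdef, haadef, hlamE, hx0def, echt, e2t, eL, hSEF]
    field_simp
    ring
  set cn := ((2 : ℝ) ^ n * (Nat.factorial n : ℝ) * Real.sqrt Real.pi) ^ (-(1 : ℝ) / 2) with hcn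
  have hexpz : ∀ z : ℝ, Real.exp (-z ^ 2 / 2) *
      Real.exp (-(2 * z ^ 2 * (Real.exp (2 * t) + Real.exp (-(2 * L))) -
          4 * r * z * Real.exp (-L) * (1 + Real.exp (2 * t)) +
          r ^ 2 * (Real.exp (2 * t) + 1) ^ 2) /
        (4 * S) - L + 2 * t)
      = Real.exp c0 * Real.exp (-aa * z ^ 2 + bb * z) := by
    intro z
    rw [← Real.exp_add, ← Real.exp_add]
    congr 1
    rw [hc0def, haadef, hbbdef, e2t, e2L, eL, hSEF]
    field_simp
    ring
  have hLHS : (∫ z : ℝ, hermiteFn n z *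
        (4 * (z - mm) / (Real.sqrt Real.pi * S ^ ((3 : ℝ) / 2)) *
          Real.exp (-(2 * z ^ 2 * (Real.exp (2 * t) + Real.exp (-(2 * L))) -
                4 * r * z * Real.exp (-L) * (1 + Real.exp (2 * t)) +
                r ^ 2 * (Real.exp (2 * t) + 1) ^ 2) /
              (4 * S) - L + 2 * t)))
      = (cn * (4 / (Real.sqrt Real.pi * S ^ ((3 : ℝ) / 2))) * Real.exp c0) *
          ∫ z : ℝ, (z - mm) * (PH n).eval z * Real.exp (-aa * z ^ 2 + bb * z) := by
    rw [← MeasureTheory.integral_const_mul]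
    congr 1
    funext z
    rw [hermiteFn, physHermite_eval n z, ← hcn]
    linear_combination (cn * (4 / (Real.sqrt Real.pi * S ^ ((3 : ℝ) / 2))) *
      ((z - mm) * (PH n).eval z)) * hexpz z
  rw [hLHS, key_integral haa hlam hb hlam0.ne' mm n]
  rw [(hermiteFn_hasDerivAt n x0).deriv]
  rw [show hermiteFn n x0 = cn * ((PH n).eval x0 * Real.exp (-x0 ^ 2 / 2)) from by
    rw [hermiteFn, physHermite_eval n x0, ← hcn]; ring]
  rw [← hcn, hexpn]
  clear_value cn
  -- scalar endgame
  have hsqS : (0 : ℝ) < Real.sqrt S := Real.sqrt_pos.mpr hS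
  have hsqpi : (0 : ℝ) < Real.sqrt Real.pi := Real.sqrt_pos.mpr Real.pi_pos
  have hsq : Real.sqrt (Real.pi / aa) = Real.sqrt Real.pi * Real.sqrt S / E := by
    rw [show Real.pi / aa = Real.pi * (S / Real.exp (2 * t)) from by
        rw [haadef]; field_simp,
      Real.sqrt_mul Real.pi_pos.le, Real.sqrt_div hS.le, e2t, Real.sqrt_sq hE.le]
    ring
  have hrpow : S ^ ((3 : ℝ) / 2) = S * Real.sqrt S := by
    rw [show (3 : ℝ) / 2 = 1 + 1 / 2 by norm_num, Real.rpow_add hS, Real.rpow_one,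
      ← Real.sqrt_eq_rpow]
  have hCf : 4 / (Real.sqrt Real.pi * S ^ ((3 : ℝ) / 2)) * Real.sqrt (Real.pi / aa)
      = 4 / (S * E) := by
    rw [hsq, hrpow]
    field_simp
  have hetl : Real.exp (2 * t - L) = E ^ 2 / F := by
    rw [Real.exp_sub, e2t, ← hFdef]
  have h1 : Real.exp c0 * Real.exp (bb ^ 2 / (4 * aa))
      = Real.exp (-(r ^ 2) * Real.cosh t ^ 2) * (E ^ 2 / F) := by
    rw [← Real.exp_add, ← hetl, ← Real.exp_add]
    congr 1
    rw [hc0def, hbbdef, haadef, echt, e2t, eL, hSEF]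
    field_simp
    ring
  have h2 : Real.exp (-(r ^ 2) * Real.cosh t ^ 2 / 2) * Real.exp (-x0 ^ 2 / 2)
      = Real.exp (-(r ^ 2) * Real.cosh t ^ 2) := by
    rw [← Real.exp_add]
    congr 1
    rw [hx0def]
    ring
  set X := Real.exp (-(r ^ 2) * Real.cosh t ^ 2) with hX
  set Y := Real.exp (-(r ^ 2) * Real.cosh t ^ 2 / 2) with hY
  set Z := Real.exp (-x0 ^ 2 / 2) with hZ
  set P := (PH n).eval x0 with hP
  set D := (PH n).derivative.eval x0 with hD
  clear_value X Y Z P D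
  calc cn * (4 / (Real.sqrt Real.pi * S ^ ((3 : ℝ) / 2))) * Real.exp c0 *
        (Real.sqrt (Real.pi / aa) * Real.exp (bb ^ 2 / (4 * aa)) * lam ^ n *
          ((lam * x0 - mm) * P + (1 - lam ^ 2) / (2 * lam) * D))
      = (4 / (Real.sqrt Real.pi * S ^ ((3 : ℝ) / 2)) * Real.sqrt (Real.pi / aa)) *
          (Real.exp c0 * Real.exp (bb ^ 2 / (4 * aa))) * cn * lam ^ n *
          ((lam * x0 - mm) * P + (1 - lam ^ 2) / (2 * lam) * D) := by ring
    _ = (4 / (S * E)) * (X * (E ^ 2 / F)) * cn * lam ^ n *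
          ((lam * x0 - mm) * P + (1 - lam ^ 2) / (2 * lam) * D) := by rw [hCf, h1]
    _ = 2 * (Y * lam ^ n) * (cn * (D - x0 * P) * Z + r * Real.sinh t * (cn * (P * Z))) := by
        rw [show 2 * (Y * lam ^ n) * (cn * (D - x0 * P) * Z + r * Real.sinh t * (cn * (P * Z)))
            = 2 * lam ^ n * cn * (D - x0 * P + r * Real.sinh t * P) * (Y * Z) from by ring,
          h2]
        rw [hlamE, hx0def, hmmdef, echt, esht, echL, hSEF]
        field_simp
        ring
end

section
/- For every real x ≥ 1, x√(x² − 1) − log( x + √(x² − 1) ) ≥ (4√2/3)(x − 1)^{3/2}. -/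
open Real

private noncomputable def f12 (x : ℝ) : ℝ :=
  x * Real.sqrt (x ^ 2 - 1) - Real.log (x + Real.sqrt (x ^ 2 - 1)) -
    4 * Real.sqrt 2 / 3 * (x - 1) ^ ((3 : ℝ) / 2)

private lemma f12_mono : MonotoneOn f12 (Set.Ici 1) := by
  apply monotoneOn_of_deriv_nonneg (convex_Ici 1)
  · -- continuity
    apply ContinuousOn.sub
    apply ContinuousOn.sub
    · exact (continuous_id.mul ((continuous_pow 2 |>.sub continuous_const).sqrt)).continuousOn
    · apply ContinuousOn.log
      · exact (continuous_id.add ((continuous_pow 2 |>.sub continuous_const).sqrt)).continuousOn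
      · intro y hy
        have hy1 : (1:ℝ) ≤ y := hy
        have : 0 ≤ Real.sqrt (y ^ 2 - 1) := Real.sqrt_nonneg _
        positivity
    · exact (continuous_const.mul ((continuous_id.sub continuous_const).rpow_const
        fun y => Or.inr (by norm_num))).continuousOn
  · -- differentiability on interior
    rw [interior_Ici]
    intro y hy
    have hy1 : (1:ℝ) < y := hy
    have hpos : (0:ℝ) < y ^ 2 - 1 := by nlinarith
    have hs : 0 < Real.sqrt (y ^ 2 - 1) := Real.sqrt_pos.mpr hpos
    have h1 : HasDerivAt (fun z : ℝ => z ^ 2 - 1) (2 * y) y := by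
      simpa using (hasDerivAt_pow 2 y).sub_const 1
    have h2 := h1.sqrt (ne_of_gt hpos)
    have h3 := (hasDerivAt_id y).mul h2
    have h4 := (hasDerivAt_id y).add h2
    have h5 := h4.log (ne_of_gt (by show 0 < y + Real.sqrt (y ^ 2 - 1); linarith))
    have h6 := ((hasDerivAt_id y).sub_const 1).rpow_const
      (p := (3:ℝ)/2) (Or.inl (by simp only [id_eq]; exact sub_ne_zero.mpr (by linarith)))
    exact (((h3.sub h5).sub (h6.const_mul (4 * Real.sqrt 2 / 3))).differentiableAt).differentiableWithinAt
  · -- derivative nonneg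
    rw [interior_Ici]
    intro y hy
    have hy1 : (1:ℝ) < y := hy
    have hpos : (0:ℝ) < y ^ 2 - 1 := by nlinarith
    have hs : 0 < Real.sqrt (y ^ 2 - 1) := Real.sqrt_pos.mpr hpos
    have hsq : Real.sqrt (y ^ 2 - 1) ^ 2 = y ^ 2 - 1 := Real.sq_sqrt hpos.le
    have h1 : HasDerivAt (fun z : ℝ => z ^ 2 - 1) (2 * y) y := by
      simpa using (hasDerivAt_pow 2 y).sub_const 1
    have h2 : HasDerivAt (fun z : ℝ => Real.sqrt (z ^ 2 - 1))
        (2 * y / (2 * Real.sqrt (y ^ 2 - 1))) y := h1.sqrt (ne_of_gt hpos)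
    have h3 := (hasDerivAt_id y).mul h2
    have h4 := (hasDerivAt_id y).add h2
    have hys : 0 < y + Real.sqrt (y ^ 2 - 1) := by linarith
    have h5 := h4.log (ne_of_gt hys)
    have h6 := ((hasDerivAt_id y).sub_const 1).rpow_const
      (p := (3:ℝ)/2) (Or.inl (by simp only [id_eq]; exact sub_ne_zero.mpr (by linarith)))
    have hD := (h3.sub h5).sub (h6.const_mul (4 * Real.sqrt 2 / 3))
    simp only [id_eq] at hD
    have hD' : HasDerivAt f12
        (1 * Real.sqrt (y ^ 2 - 1) + y * (2 * y / (2 * Real.sqrt (y ^ 2 - 1))) -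
          (1 + 2 * y / (2 * Real.sqrt (y ^ 2 - 1))) / (y + Real.sqrt (y ^ 2 - 1)) -
          4 * Real.sqrt 2 / 3 * (1 * ((3:ℝ) / 2) * (y - 1) ^ ((3:ℝ) / 2 - 1))) y := hD
    rw [hD'.deriv]
    have e1 : 1 * Real.sqrt (y ^ 2 - 1) + y * (2 * y / (2 * Real.sqrt (y ^ 2 - 1))) -
          (1 + 2 * y / (2 * Real.sqrt (y ^ 2 - 1))) / (y + Real.sqrt (y ^ 2 - 1)) =
        2 * Real.sqrt (y ^ 2 - 1) := by
      field_simp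
      linear_combination (-Real.sqrt (y ^ 2 - 1) - y) * hsq
    have e2 : (y - 1) ^ ((3:ℝ)/2 - 1) = Real.sqrt (y - 1) := by
      rw [show (3:ℝ)/2 - 1 = 1/2 by norm_num, ← Real.sqrt_eq_rpow]
    rw [e1, e2]
    have key : Real.sqrt 2 * Real.sqrt (y - 1) ≤ Real.sqrt (y ^ 2 - 1) := by
      rw [← Real.sqrt_mul (by norm_num)]
      apply Real.sqrt_le_sqrt
      nlinarith
    nlinarith [key, Real.sqrt_nonneg (2:ℝ), Real.sqrt_nonneg (y-1)]

theorem stmt12 (x : ℝ) (hx : 1 ≤ x) :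
    4 * Real.sqrt 2 / 3 * (x - 1) ^ ((3 : ℝ) / 2) ≤
      x * Real.sqrt (x ^ 2 - 1) - Real.log (x + Real.sqrt (x ^ 2 - 1)) := by
  have h := f12_mono (Set.self_mem_Ici (a := (1:ℝ))) hx hx
  have h1 : f12 1 = 0 := by
    simp [f12, Real.zero_rpow (by norm_num : ((3:ℝ)/2) ≠ 0)]
  rw [h1] at h
  unfold f12 at h
  linarith
end

section
/- Let α > 1. There are constants c₁, n₀ > 0 such that for all a ∈ (1, α), all b < 2√(2(a−1)), and all N ∈ ℕ satisfying min{ N(a−1)^{3/2}, N(2√(2(a−1)) − b)³ } ≥ n₀, one has ∫_0^∞ exp( −N( (8√2/3)(a−1+y)^{3/2} − 2by ) ) dy ≤ [c₁ / ( N (2√(2(a−1)) − b) )] · exp( −(8√2/3) N (a−1)^{3/2} ). -/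
open Real MeasureTheory

lemma exp_int (c : ℝ) (hc : 0 < c) :
    (∫ y in Set.Ioi (0 : ℝ), Real.exp (-(c * y))) = 1 / c := by
  have := MeasureTheory.integral_comp_mul_left_Ioi (fun x : ℝ => Real.exp (-x)) 0 hc
  simp only [mul_zero, integral_exp_neg_Ioi, neg_zero, Real.exp_zero, smul_eq_mul,
    mul_one] at this
  rw [this]
  rw [one_div]

lemma rpow_32 (x : ℝ) (hx : 0 ≤ x) : x ^ ((3 : ℝ) / 2) = Real.sqrt x ^ 3 := by
  rw [← Real.rpow_natCast (Real.sqrt x) 3, Real.sqrt_eq_rpow, ← Real.rpow_mul hx]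
  norm_num

theorem stmt13 (α : ℝ) (hα : 1 < α) :
    ∃ c₁ n₀ : ℝ, 0 < c₁ ∧ 0 < n₀ ∧
      ∀ (a b : ℝ) (N : ℕ), 1 < a → a < α → b < 2 * Real.sqrt (2 * (a - 1)) →
        n₀ ≤ min ((N : ℝ) * (a - 1) ^ ((3 : ℝ) / 2))
            ((N : ℝ) * (2 * Real.sqrt (2 * (a - 1)) - b) ^ 3) →
        (∫ y in Set.Ioi (0 : ℝ),
            Real.exp (-(N : ℝ) *
              (8 * Real.sqrt 2 / 3 * (a - 1 + y) ^ ((3 : ℝ) / 2) - 2 * b * y))) ≤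
          c₁ / ((N : ℝ) * (2 * Real.sqrt (2 * (a - 1)) - b)) *
            Real.exp (-(8 * Real.sqrt 2 / 3) * N * (a - 1) ^ ((3 : ℝ) / 2)) := by
  refine ⟨1/2, 1, by norm_num, by norm_num, fun a b N ha haα hb hn => ?_⟩
  set s : ℝ := a - 1 with hs_def
  have hs : 0 < s := by simp [hs_def]; linarith
  set B : ℝ := 2 * Real.sqrt (2 * s) - b with hB_def
  have hB : 0 < B := by rw [hB_def]; linarith
  -- N positive
  have hN : 0 < (N : ℝ) := by
    rcases Nat.eq_zero_or_pos N with h | h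
    · exfalso; rw [h] at hn; simp at hn; linarith
    · exact_mod_cast h
  have hNB : 0 < (N : ℝ) * B := mul_pos hN hB
  set v : ℝ := Real.sqrt s with hv_def
  have hv : 0 < v := Real.sqrt_pos.mpr hs
  have hv2 : v ^ 2 = s := Real.sq_sqrt hs.le
  have h2 : Real.sqrt (2 * s) = Real.sqrt 2 * v := Real.sqrt_mul (by norm_num) s
  have hr2 : Real.sqrt 2 ^ 2 = 2 := Real.sq_sqrt (by norm_num)
  have hr2p : (0:ℝ) < Real.sqrt 2 := Real.sqrt_pos.mpr (by norm_num)
  -- pointwise bound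
  have hpt : ∀ y ∈ Set.Ioi (0:ℝ),
      Real.exp (-(N : ℝ) * (8 * Real.sqrt 2 / 3 * (s + y) ^ ((3 : ℝ) / 2) - 2 * b * y))
        ≤ Real.exp (-(8 * Real.sqrt 2 / 3) * N * s ^ ((3 : ℝ)/2)) * Real.exp (-(2 * (N:ℝ) * B * y)) := by
    intro y hy
    have hy : 0 < y := hy
    rw [← Real.exp_add, Real.exp_le_exp]
    set u : ℝ := Real.sqrt (s + y) with hu_def
    have hu2 : u ^ 2 = s + y := Real.sq_sqrt (by linarith)
    have huv : v ≤ u := Real.sqrt_le_sqrt (by linarith)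
    rw [rpow_32 _ (by linarith : (0:ℝ) ≤ s + y), rpow_32 _ hs.le, ← hv_def, ← hu_def]
    have key : u ^ 3 - v ^ 3 ≥ (3/2) * v * (u ^ 2 - v ^ 2) := by nlinarith [sq_nonneg (u - v)]
    have hBy : 2 * b * y + 2 * B * y = 4 * Real.sqrt 2 * v * y := by
      rw [hB_def, h2]; ring
    have hy2 : y = u ^ 2 - v ^ 2 := by rw [hu2, hv2]; ring
    have k2 : 8 * Real.sqrt 2 / 3 * (u ^ 3 - v ^ 3) ≥
        8 * Real.sqrt 2 / 3 * ((3/2) * v * (u ^ 2 - v ^ 2)) :=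
      mul_le_mul_of_nonneg_left key (by positivity)
    have k3 : 8 * Real.sqrt 2 / 3 * ((3/2) * v * (u ^ 2 - v ^ 2)) = 4 * Real.sqrt 2 * v * y := by
      rw [hy2]; ring
    have main : 8 * Real.sqrt 2 / 3 * u ^ 3 - 2 * b * y ≥
        8 * Real.sqrt 2 / 3 * v ^ 3 + 2 * B * y := by
      have k4 : 8 * Real.sqrt 2 / 3 * (u ^ 3 - v ^ 3) =
          8 * Real.sqrt 2 / 3 * u ^ 3 - 8 * Real.sqrt 2 / 3 * v ^ 3 := by ring
      have k5 : 2 * B * y = 4 * Real.sqrt 2 * v * y - 2 * b * y := by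
        rw [hB_def, h2]; ring
      rw [ge_iff_le, ← sub_nonneg]
      have : 8 * Real.sqrt 2 / 3 * u ^ 3 - 2 * b * y -
          (8 * Real.sqrt 2 / 3 * v ^ 3 + 2 * B * y) =
          8 * Real.sqrt 2 / 3 * (u ^ 3 - v ^ 3) -
            8 * Real.sqrt 2 / 3 * ((3/2) * v * (u ^ 2 - v ^ 2)) := by
        rw [k5, ← k3]; ring
      rw [this]
      linarith
    have := mul_le_mul_of_nonneg_left main hN.le
    nlinarith [this]
  -- integrability of dominating function
  have hint : IntegrableOn (fun y => Real.exp (-(8 * Real.sqrt 2 / 3) * N * s ^ ((3 : ℝ)/2)) *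
      Real.exp (-(2 * (N:ℝ) * B * y))) (Set.Ioi (0:ℝ)) := by
    apply Integrable.const_mul
    have := exp_neg_integrableOn_Ioi 0 (by positivity : (0:ℝ) < 2 * (N:ℝ) * B)
    simp only [neg_mul] at this
    exact this
  have hmono : (∫ y in Set.Ioi (0 : ℝ),
      Real.exp (-(N : ℝ) * (8 * Real.sqrt 2 / 3 * (s + y) ^ ((3 : ℝ) / 2) - 2 * b * y)))
      ≤ ∫ y in Set.Ioi (0:ℝ), Real.exp (-(8 * Real.sqrt 2 / 3) * N * s ^ ((3 : ℝ)/2)) *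
        Real.exp (-(2 * (N:ℝ) * B * y)) := by
    apply MeasureTheory.integral_mono_of_nonneg
    · exact Filter.Eventually.of_forall fun y => (Real.exp_pos _).le
    · exact hint
    · filter_upwards [MeasureTheory.ae_restrict_mem measurableSet_Ioi] with y hy
      exact hpt y hy
  have hcomp : (∫ y in Set.Ioi (0:ℝ), Real.exp (-(8 * Real.sqrt 2 / 3) * N * s ^ ((3 : ℝ)/2)) *
      Real.exp (-(2 * (N:ℝ) * B * y)))
      = Real.exp (-(8 * Real.sqrt 2 / 3) * N * s ^ ((3 : ℝ)/2)) * (1 / (2 * (N:ℝ) * B)) := by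
    rw [MeasureTheory.integral_const_mul, exp_int _ (by positivity)]
  calc _ ≤ _ := hmono
    _ = Real.exp (-(8 * Real.sqrt 2 / 3) * N * s ^ ((3 : ℝ)/2)) * (1 / (2 * (N:ℝ) * B)) := hcomp
    _ = (1/2) / ((N:ℝ) * B) * Real.exp (-(8 * Real.sqrt 2 / 3) * N * s ^ ((3 : ℝ)/2)) := by
        field_simp
end

section
/- There are constants c, n₀ > 0 such that for all t ∈ (0,1) and all N ∈ ℕ with N t³ ≥ n₀, ∫_t^∞ sinh(s)^{3/2} cosh(s)^{1/2} e^{N(2s − sinh(2s))} ds ≤ (c / (N t)) · e^{2t} · e^{N(2t − sinh(2t))}. -/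
open Real MeasureTheory Filter

private lemma phi_deriv (N : ℕ) (s : ℝ) :
    HasDerivAt (fun s : ℝ => -Real.exp ((N : ℝ) * (2 * s - Real.sinh (2 * s))))
      (4 * (N : ℝ) * Real.sinh s ^ 2 * Real.exp ((N : ℝ) * (2 * s - Real.sinh (2 * s)))) s := by
  have h0 : HasDerivAt (fun s : ℝ => 2 * s) 2 s := by
    simpa using (hasDerivAt_id s).const_mul 2
  have h1 : HasDerivAt (fun s : ℝ => Real.sinh (2 * s)) (Real.cosh (2 * s) * 2) s := by
    simpa using h0.sinh
  have h2 : HasDerivAt (fun s : ℝ => (N : ℝ) * (2 * s - Real.sinh (2 * s)))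
      ((N : ℝ) * (2 - Real.cosh (2 * s) * 2)) s := (h0.sub h1).const_mul _
  have h3 := (h2.exp).neg
  refine HasDerivAt.congr_deriv h3 ?_
  have hc : Real.cosh (2 * s) = Real.cosh s ^ 2 + Real.sinh s ^ 2 := Real.cosh_two_mul s
  have hs : Real.cosh s ^ 2 = 1 + Real.sinh s ^ 2 := Real.cosh_sq' s
  rw [hc, hs]
  ring

theorem stmt14 :
    ∃ c n₀ : ℝ, 0 < c ∧ 0 < n₀ ∧
      ∀ (t : ℝ) (N : ℕ), 0 < t → t < 1 → n₀ ≤ (N : ℝ) * t ^ 3 →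
        (∫ s in Set.Ioi t,
            Real.sinh s ^ ((3 : ℝ) / 2) * Real.cosh s ^ ((1 : ℝ) / 2) *
              Real.exp ((N : ℝ) * (2 * s - Real.sinh (2 * s)))) ≤
          c / ((N : ℝ) * t) * Real.exp (2 * t) *
            Real.exp ((N : ℝ) * (2 * t - Real.sinh (2 * t))) := by
  refine ⟨1, 1, one_pos, one_pos, ?_⟩
  intro t N ht ht1 hn
  set g : ℝ → ℝ := fun s => -Real.exp ((N : ℝ) * (2 * s - Real.sinh (2 * s))) with hg
  set g' : ℝ → ℝ := fun s =>
    4 * (N : ℝ) * Real.sinh s ^ 2 * Real.exp ((N : ℝ) * (2 * s - Real.sinh (2 * s))) with hg'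
  have ht2a : t ^ 2 ≤ 1 := by nlinarith [mul_pos (sub_pos.mpr ht1) (show (0:ℝ) < t + 1 by linarith)]
  have ht3 : t ^ 3 ≤ 1 := by nlinarith [mul_le_mul_of_nonneg_left ht2a ht.le]
  have hN1 : (1 : ℝ) ≤ (N : ℝ) := by
    have := mul_le_mul_of_nonneg_left ht3 (Nat.cast_nonneg (α := ℝ) N)
    simpa using le_trans hn this
  have hNpos : (0 : ℝ) < (N : ℝ) := lt_of_lt_of_le one_pos hN1
  have hderiv : ∀ s ∈ Set.Ici t, HasDerivAt g (g' s) s := fun s _ => phi_deriv N s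
  have hpos : ∀ s ∈ Set.Ioi t, 0 ≤ g' s := by
    intro s _
    have := Real.exp_pos ((N : ℝ) * (2 * s - Real.sinh (2 * s)))
    positivity
  -- the limit at infinity
  have htend : Tendsto g atTop (nhds 0) := by
    rw [show (0 : ℝ) = -0 by ring]
    apply Tendsto.neg
    apply Real.tendsto_exp_atBot.comp
    apply tendsto_atBot_mono' _ _ tendsto_neg_atTop_atBot
    filter_upwards [eventually_ge_atTop (4 : ℝ)] with s hs
    have h1 : Real.exp (-(2 * s)) ≤ 1 := Real.exp_le_one_iff.mpr (by linarith)
    have h2 : 1 + s ≤ Real.exp s := by linarith [Real.add_one_le_exp s]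
    have h3 : (1 + s) * (1 + s) ≤ Real.exp (2 * s) := by
      rw [two_mul, Real.exp_add]
      nlinarith
    have h4 : Real.sinh (2 * s) = (Real.exp (2 * s) - Real.exp (-(2 * s))) / 2 :=
      Real.sinh_eq (2 * s)
    have h5 : s ≤ Real.sinh (2 * s) - 2 * s := by nlinarith
    have h6 : (N : ℝ) * (2 * s - Real.sinh (2 * s)) ≤ 1 * (2 * s - Real.sinh (2 * s)) := by
      apply mul_le_mul_of_nonpos_right hN1 (by linarith)
    nlinarith
  have hint : ∫ s in Set.Ioi t, g' s = 0 - g t :=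
    integral_Ioi_of_hasDerivAt_of_nonneg' hderiv hpos htend
  have hintg : IntegrableOn g' (Set.Ioi t) :=
    integrableOn_Ioi_deriv_of_nonneg' hderiv hpos htend
  set K : ℝ := Real.sqrt 2 / (4 * (N : ℝ) * t) with hK
  have hKpos : 0 < K := by
    apply div_pos (Real.sqrt_pos.mpr two_pos)
    positivity
  -- pointwise bound
  have hbound : ∀ s ∈ Set.Ioi t,
      Real.sinh s ^ ((3 : ℝ) / 2) * Real.cosh s ^ ((1 : ℝ) / 2) *
        Real.exp ((N : ℝ) * (2 * s - Real.sinh (2 * s))) ≤ K * g' s := by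
    intro s hs
    have hts : t < s := hs
    have hsp : 0 < Real.sinh s := Real.sinh_pos_iff.mpr (lt_trans ht hts)
    have htsinh : t ≤ Real.sinh s := by
      have h1 := Real.self_lt_sinh_iff.mpr ht
      have h2 := Real.sinh_lt_sinh.mpr hts
      linarith
    have hcb : Real.cosh s ≤ 2 / t ^ 2 * Real.sinh s := by
      have h1 : Real.cosh s - Real.sinh s = Real.exp (-s) := Real.cosh_sub_sinh s
      have h2 : Real.exp (-s) ≤ 1 := Real.exp_le_one_iff.mpr (by linarith)
      have ht2 : 0 < t ^ 2 := by positivity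
      rw [div_mul_eq_mul_div, le_div_iff₀ ht2]
      have hC : Real.cosh s ≤ Real.sinh s + 1 := by linarith
      nlinarith [mul_le_mul_of_nonneg_right hC (sq_nonneg t),
        mul_le_mul_of_nonneg_left (show t ^ 2 ≤ 1 by nlinarith) hsp.le]
    have hcpos : 0 < Real.cosh s := Real.cosh_pos s
    -- rpow manipulation
    have key : Real.sinh s ^ ((3 : ℝ) / 2) * Real.cosh s ^ ((1 : ℝ) / 2) ≤
        Real.sqrt 2 / t * Real.sinh s ^ 2 := by
      have e1 : Real.sinh s ^ ((3 : ℝ) / 2) = Real.sinh s * Real.sinh s ^ ((1 : ℝ) / 2) := by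
        rw [show (3 : ℝ) / 2 = 1 + 1 / 2 by norm_num, Real.rpow_add hsp, Real.rpow_one]
      rw [e1, mul_assoc, ← Real.mul_rpow hsp.le hcpos.le]
      have e2 : (Real.sinh s * Real.cosh s) ^ ((1 : ℝ) / 2) =
          Real.sqrt (Real.sinh s * Real.cosh s) := (Real.sqrt_eq_rpow _).symm
      rw [e2]
      have h3 : Real.sqrt (Real.sinh s * Real.cosh s) ≤ Real.sqrt 2 / t * Real.sinh s := by
        have h4 : Real.sinh s * Real.cosh s ≤ (Real.sqrt 2 / t * Real.sinh s) ^ 2 := by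
          have hsq : Real.sqrt 2 ^ 2 = 2 := Real.sq_sqrt (by norm_num)
          have : (Real.sqrt 2 / t * Real.sinh s) ^ 2 = 2 / t ^ 2 * Real.sinh s ^ 2 := by
            field_simp; nlinarith
          rw [this]
          calc Real.sinh s * Real.cosh s ≤ Real.sinh s * (2 / t ^ 2 * Real.sinh s) :=
                mul_le_mul_of_nonneg_left hcb hsp.le
            _ = 2 / t ^ 2 * Real.sinh s ^ 2 := by ring
        calc Real.sqrt (Real.sinh s * Real.cosh s) ≤
              Real.sqrt ((Real.sqrt 2 / t * Real.sinh s) ^ 2) := Real.sqrt_le_sqrt h4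
          _ = Real.sqrt 2 / t * Real.sinh s := Real.sqrt_sq (by positivity)
      calc Real.sinh s * Real.sqrt (Real.sinh s * Real.cosh s) ≤
            Real.sinh s * (Real.sqrt 2 / t * Real.sinh s) :=
              mul_le_mul_of_nonneg_left h3 hsp.le
        _ = Real.sqrt 2 / t * Real.sinh s ^ 2 := by ring
    have hE := Real.exp_pos ((N : ℝ) * (2 * s - Real.sinh (2 * s)))
    have e3 : K * g' s = Real.sqrt 2 / t * Real.sinh s ^ 2 *
        Real.exp ((N : ℝ) * (2 * s - Real.sinh (2 * s))) := by
      simp only [hg', hK]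
      field_simp
    rw [e3]
    exact mul_le_mul_of_nonneg_right key hE.le
  -- integrability of the integrand
  have hmeas : AEStronglyMeasurable (fun s =>
      Real.sinh s ^ ((3 : ℝ) / 2) * Real.cosh s ^ ((1 : ℝ) / 2) *
        Real.exp ((N : ℝ) * (2 * s - Real.sinh (2 * s))))
        (volume.restrict (Set.Ioi t)) := by
    apply Continuous.aestronglyMeasurable
    apply Continuous.mul
    apply Continuous.mul
    · exact Real.continuous_sinh.rpow_const (fun x => Or.inr (by norm_num))
    · exact Real.continuous_cosh.rpow_const (fun x => Or.inr (by norm_num))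
    · exact Real.continuous_exp.comp (continuous_const.mul
        ((continuous_const.mul continuous_id).sub
          (Real.continuous_sinh.comp (continuous_const.mul continuous_id))))
  have hintf : IntegrableOn (fun s =>
      Real.sinh s ^ ((3 : ℝ) / 2) * Real.cosh s ^ ((1 : ℝ) / 2) *
        Real.exp ((N : ℝ) * (2 * s - Real.sinh (2 * s)))) (Set.Ioi t) := by
    apply Integrable.mono' (hintg.const_mul K) hmeas
    rw [ae_restrict_iff' measurableSet_Ioi]
    filter_upwards with s hs
    have h1 := hbound s hs
    have hsp : 0 ≤ Real.sinh s := (Real.sinh_pos_iff.mpr (lt_trans ht hs)).le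
    have hE := (Real.exp_pos ((N : ℝ) * (2 * s - Real.sinh (2 * s)))).le
    rw [Real.norm_eq_abs, abs_of_nonneg (by positivity)]
    exact h1
  -- put it together
  have step1 : (∫ s in Set.Ioi t,
      Real.sinh s ^ ((3 : ℝ) / 2) * Real.cosh s ^ ((1 : ℝ) / 2) *
        Real.exp ((N : ℝ) * (2 * s - Real.sinh (2 * s)))) ≤ ∫ s in Set.Ioi t, K * g' s := by
    apply setIntegral_mono_on hintf (hintg.const_mul K) measurableSet_Ioi hbound
  have step2 : ∫ s in Set.Ioi t, K * g' s =
      K * Real.exp ((N : ℝ) * (2 * t - Real.sinh (2 * t))) := by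
    rw [integral_const_mul, hint]
    simp only [hg]
    ring
  have step3 : K * Real.exp ((N : ℝ) * (2 * t - Real.sinh (2 * t))) ≤
      1 / ((N : ℝ) * t) * Real.exp (2 * t) *
        Real.exp ((N : ℝ) * (2 * t - Real.sinh (2 * t))) := by
    apply mul_le_mul_of_nonneg_right _ (Real.exp_pos _).le
    have h1 : (1 : ℝ) ≤ Real.exp (2 * t) := by
      rw [show (1:ℝ) = Real.exp 0 by simp]
      exact Real.exp_le_exp.mpr (by linarith)
    have h2 : Real.sqrt 2 ≤ 2 := by
      nlinarith [Real.sq_sqrt (show (0:ℝ) ≤ 2 by norm_num), Real.sqrt_nonneg 2]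
    have h3 : K ≤ 1 / ((N : ℝ) * t) := by
      rw [hK, div_le_div_iff₀ (by positivity) (by positivity)]
      nlinarith [Real.sqrt_nonneg 2, mul_pos hNpos ht, h2]
    calc K ≤ 1 / ((N : ℝ) * t) := h3
      _ ≤ 1 / ((N : ℝ) * t) * Real.exp (2 * t) :=
          le_mul_of_one_le_right (by positivity) h1
  linarith [step1, step2 ▸ step1, step3]
end
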